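/- arXiv:2501.15952 — 3 statements merged into one kernel-verified Lean document; each statement's English description precedes it below -/
import Mathlib

section
/- Let G=(V,E) be a prison-free graph and let F, F' ∈ cmd_4(G) with F∩F' = ∅. Then for every vertex v∈F', the neighborhood N(v) intersects at most one class of F. -/
namespace PrisonFreePaper

variable {V : Type*}

/-- The prison graph on 5 vertices: `K₅` minus the two edges `{4,2}` and `{4,3}`
(which share the vertex `4`).  Thus `{0,1,2,3}` is a 4-clique and the vertex `4`
is adjacent exactly to `0` and `1`. -/
def prison : SimpleGraph (Fin 5) where
  Adj a b := a ≠ b ∧ ¬((a = 4 ∧ (b = 2 ∨ b = 3)) ∨ (b = 4 ∧ (a = 2 ∨ a = 3)))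
  symm := by
    constructor
    rintro a b ⟨h1, h2⟩
    exact ⟨h1.symm, by tauto⟩
  loopless := by
    constructor
    rintro a ⟨h, _⟩
    exact h rfl

/-- `P` is a 5-vertex set inducing a subgraph of `G` isomorphic to the prison. -/
def InducesPrison (G : SimpleGraph V) (P : Set V) : Prop :=
  ∃ f : Fin 5 ↪ V, Set.range f = P ∧ ∀ a b, G.Adj (f a) (f b) ↔ prison.Adj a b

/-- `G` is prison-free: no 5-vertex set induces a prison. -/
def PrisonFree (G : SimpleGraph V) : Prop :=
  ¬ ∃ P : Set V, InducesPrison G P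

/-- `P` is the set of classes witnessing that the induced subgraph `G[F]` is
complete multipartite: the classes are nonempty, pairwise disjoint, their union
is `F`, and two vertices of `F` are adjacent iff they lie in different classes. -/
def IsCMP (G : SimpleGraph V) (F : Set V) (P : Set (Set V)) : Prop :=
  (∀ C ∈ P, C.Nonempty ∧ C ⊆ F) ∧
  (⋃₀ P = F) ∧
  (∀ C ∈ P, ∀ D ∈ P, C ≠ D → Disjoint C D) ∧
  (∀ u ∈ F, ∀ v ∈ F, (G.Adj u v ↔ ¬ ∃ C ∈ P, u ∈ C ∧ v ∈ C))

/-- The induced subgraph `G[F]` is complete multipartite. -/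
def CMP (G : SimpleGraph V) (F : Set V) : Prop := ∃ P, IsCMP G F P

/-- The induced subgraph `G[F]` is complete multipartite with at least `p` classes. -/
def CMPAtLeast (G : SimpleGraph V) (F : Set V) (p : ℕ) : Prop :=
  ∃ P, IsCMP G F P ∧ ∃ f : Fin p ↪ Set V, ∀ i, f i ∈ P

/-- `F ∈ cmd_p` of the induced subgraph of `G` on the ground set `W`:
`F` is an inclusion-wise maximal subset of `W` inducing a complete multipartite
graph with at least `p` classes. -/
def Cmd (G : SimpleGraph V) (W : Set V) (p : ℕ) (F : Set V) : Prop :=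
  F ⊆ W ∧ CMPAtLeast G F p ∧
    ∀ F', F' ⊆ W → F ⊆ F' → CMPAtLeast G F' p → F' = F

/-- The neighbourhood of `v` in `G` intersects at most one class of `P`. -/
def MeetsAtMostOneClass (G : SimpleGraph V) (P : Set (Set V)) (v : V) : Prop :=
  ∀ C ∈ P, ∀ D ∈ P, (∃ x ∈ C, G.Adj v x) → (∃ y ∈ D, G.Adj v y) → C = D

/-- The induced subgraph `G[X]`, viewed as a graph on the same vertex set
(only edges with both endpoints in `X` are kept). -/
def inducedOn (G : SimpleGraph V) (X : Set V) : SimpleGraph V where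
  Adj a b := G.Adj a b ∧ a ∈ X ∧ b ∈ X
  symm := by constructor; rintro a b ⟨h, ha, hb⟩; exact ⟨h.symm, hb, ha⟩
  loopless := by constructor; rintro a ⟨h, _⟩; exact G.ne_of_adj h rfl

/-- The set of edges of `G` with both endpoints in `X`, i.e. the edges of `G[X]`. -/
def edgesWithin (G : SimpleGraph V) (X : Set V) : Set (Sym2 V) :=
  (inducedOn G X).edgeSet

/-- `(G,k)` is a yes-instance of Prison-Free Edge Deletion. -/
def DeletionYes (G : SimpleGraph V) (k : ℕ) : Prop :=
  ∃ A : Set (Sym2 V), A ⊆ G.edgeSet ∧ A.Finite ∧ A.ncard ≤ k ∧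
    PrisonFree (G.deleteEdges A)

/-- `P` is a strict supergraph of a prison in `G`: a 5-vertex set whose induced
subgraph is `K₅` or `K₅` minus one edge (at most one non-adjacent pair). -/
def StrictSupPrison (G : SimpleGraph V) (P : Set V) : Prop :=
  P.ncard = 5 ∧ ∃ u v : V, ∀ x ∈ P, ∀ y ∈ P, x ≠ y → ¬ G.Adj x y →
    (x = u ∧ y = v) ∨ (x = v ∧ y = u)

/-- `P` is a supergraph of a prison in `G`: a 5-vertex set whose induced subgraph
contains a prison on `P` as a spanning subgraph, i.e. all non-adjacent pairs in `P`
are among two pairs sharing a common vertex. -/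
def SupPrison (G : SimpleGraph V) (P : Set V) : Prop :=
  P.ncard = 5 ∧ ∃ w u v : V, ∀ x ∈ P, ∀ y ∈ P, x ≠ y → ¬ G.Adj x y →
    (({x, y} : Set V) = {w, u} ∨ ({x, y} : Set V) = {w, v})

/-- Hypothesis (H1): every edge of `G` that does not have both endpoints in `S`
is contained in a strict supergraph of a prison in `G`. -/
def H1 (G : SimpleGraph V) (S : Set V) : Prop :=
  ∀ u v : V, G.Adj u v → ¬(u ∈ S ∧ v ∈ S) →
    ∃ P, StrictSupPrison G P ∧ u ∈ P ∧ v ∈ P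

/-- Hypothesis (H2): every 5-vertex set inducing a prison in `G` contains at least
two edges with both endpoints in `S`. -/
def H2 (G : SimpleGraph V) (S : Set V) : Prop :=
  ∀ P, InducesPrison G P →
    ∃ e₁ e₂ : Sym2 V, e₁ ≠ e₂ ∧ e₁ ∈ edgesWithin G (P ∩ S) ∧ e₂ ∈ edgesWithin G (P ∩ S)

/-- `B`: the edges of `G−S` lying in no triangle of `G−S`. -/
def BSet (G : SimpleGraph V) (S : Set V) : Set (Sym2 V) :=
  {e ∈ edgesWithin G Sᶜ | ¬ ∃ w ∈ Sᶜ, ∀ x ∈ e, G.Adj w x}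

/-- `B_e` for the edge `e = ab` of `G[S]`: the edges of `B` both of whose endpoints
are adjacent in `G` to both `a` and `b`. -/
def BOf (G : SimpleGraph V) (S : Set V) (a b : V) : Set (Sym2 V) :=
  {f ∈ BSet G S | ∀ x ∈ f, G.Adj x a ∧ G.Adj x b}

/-- `V(B_e)`: the set of endpoints of the edges of `B_e`. -/
def BVerts (G : SimpleGraph V) (S : Set V) (a b : V) : Set V :=
  {x | ∃ f ∈ BOf G S a b, x ∈ f}

/-- The graph `G ∪ A` obtained by adding the pairs in `A` as edges. -/
def addEdges (G : SimpleGraph V) (A : Set (Sym2 V)) : SimpleGraph V :=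
  G ⊔ SimpleGraph.fromEdgeSet A

/-- `A` is a prison-free completion set for `G`: a set of non-edges (unordered
pairs of distinct vertices not adjacent in `G`) whose addition makes `G` prison-free. -/
def CompletionSet (G : SimpleGraph V) (A : Set (Sym2 V)) : Prop :=
  (∀ e ∈ A, ¬ e.IsDiag) ∧ (∀ e ∈ A, e ∉ G.edgeSet) ∧ PrisonFree (addEdges G A)

/-- `A` is a minimal prison-free completion set for `G`. -/
def MinCompletionSet (G : SimpleGraph V) (A : Set (Sym2 V)) : Prop :=
  CompletionSet G A ∧ ∀ A' ⊂ A, ¬ CompletionSet G A'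

/-- `A` is a solution to the instance `(G,k)` of Prison-Free Edge Completion:
a prison-free completion set of size at most `k`. -/
def Solution (G : SimpleGraph V) (k : ℕ) (A : Set (Sym2 V)) : Prop :=
  CompletionSet G A ∧ A.Finite ∧ A.ncard ≤ k

/-- `A` is a minimal solution to `(G,k)`: a solution no proper subset of which is a
prison-free completion set. -/
def MinSolution (G : SimpleGraph V) (k : ℕ) (A : Set (Sym2 V)) : Prop :=
  Solution G k A ∧ ∀ A' ⊂ A, ¬ CompletionSet G A'

/-- `K` is a set of 4 vertices inducing a complete graph `K₄` in `G`. -/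
def IsK4 (G : SimpleGraph V) (K : Set V) : Prop :=
  K.ncard = 4 ∧ ∀ u ∈ K, ∀ v ∈ K, u ≠ v → G.Adj u v

/-- The modulator property of the set `S` (output of the sunflower-based
Lemma): for every prison `P` in `G` and every edge set `A ⊆ E(G)` with `|A| ≤ k`,
if deleting `A` from `G[S]` yields a prison-free graph then `A` contains an edge
of `G[P]`. -/
def GoodModulator (G : SimpleGraph V) (k : ℕ) (S : Set V) : Prop :=
  ∀ P : Set V, InducesPrison G P →
    ∀ A : Set (Sym2 V), A ⊆ G.edgeSet → A.Finite → A.ncard ≤ k →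
      PrisonFree ((inducedOn G S).deleteEdges A) →
      ∃ e ∈ A, e ∈ edgesWithin G P

/-- Hypothesis (H3): for every `F' ∈ cmd₃(G−S)` and every inclusion-wise maximal
set `F ⊇ F'` such that `G[F]` is complete multipartite, some vertex outside `F`
has neighbours in at least two classes of `F`. -/
def H3 (G : SimpleGraph V) (S : Set V) : Prop :=
  ∀ F', Cmd G Sᶜ 3 F' → ∀ F : Set V, F' ⊆ F → CMP G F →
    (∀ F'', F ⊆ F'' → CMP G F'' → F'' = F) →
    ∃ v ∉ F, ∃ P, IsCMP G F P ∧
      ∃ C ∈ P, ∃ D ∈ P, C ≠ D ∧ (∃ x ∈ C, G.Adj v x) ∧ ∃ y ∈ D, G.Adj v y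

/-- `F` is an inclusion-wise maximal subset of `W` inducing a complete
multipartite subgraph of `G`. -/
def MaxCMPon (G : SimpleGraph V) (W F : Set V) : Prop :=
  F ⊆ W ∧ CMP G F ∧ ∀ F'', F'' ⊆ W → F ⊆ F'' → CMP G F'' → F'' = F



/-! ### Auxiliary lemmas for Statement 3 -/

instance : DecidableRel prison.Adj :=
  fun a b => decidable_of_iff
    (a ≠ b ∧ ¬((a = 4 ∧ (b = 2 ∨ b = 3)) ∨ (b = 4 ∧ (a = 2 ∨ a = 3)))) Iff.rfl

/-- If `G` contains five vertices `a b c d e` with `{a,b,c,d}` a clique and `e`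
adjacent to `a, b` but not to `c, d`, then `G` has an induced prison. -/
lemma prison_config {G : SimpleGraph V} (hG : PrisonFree G)
    {a b c d e : V}
    (hab : G.Adj a b) (hac : G.Adj a c) (had : G.Adj a d)
    (hbc : G.Adj b c) (hbd : G.Adj b d) (hcd : G.Adj c d)
    (hea : G.Adj e a) (heb : G.Adj e b)
    (hec : ¬ G.Adj e c) (hed : ¬ G.Adj e d)
    (hec' : e ≠ c) (hed' : e ≠ d) : False := by
  have hba := hab.symm; have hca := hac.symm; have hda := had.symm
  have hcb := hbc.symm; have hdb := hbd.symm; have hdc := hcd.symm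
  have hae := hea.symm; have hbe := heb.symm
  have hce : ¬ G.Adj c e := fun h => hec h.symm
  have hde : ¬ G.Adj d e := fun h => hed h.symm
  have n1 := hab.ne; have n2 := hac.ne; have n3 := had.ne
  have n4 := hbc.ne; have n5 := hbd.ne; have n6 := hcd.ne
  have n7 := hea.ne; have n8 := heb.ne
  have n1' := n1.symm; have n2' := n2.symm; have n3' := n3.symm
  have n4' := n4.symm; have n5' := n5.symm; have n6' := n6.symm
  have n7' := n7.symm; have n8' := n8.symm
  have hce' := hec'.symm; have hde' := hed'.symm
  have hinj : Function.Injective ![a, b, c, d, e] := by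
    intro i j h
    fin_cases i <;> fin_cases j <;> simp_all
  apply hG
  refine ⟨_, ⟨⟨![a, b, c, d, e], hinj⟩, rfl, ?_⟩⟩
  intro i j
  fin_cases i <;> fin_cases j <;>
    simp only [Function.Embedding.coeFn_mk, Matrix.cons_val_zero, Matrix.cons_val_one,
      Matrix.head_cons, Matrix.cons_val_two, Matrix.tail_cons, Matrix.cons_val_three,
      Matrix.cons_val_four, Matrix.cons_val_fin_one, Matrix.head_fin_const] <;>
    first
      | exact iff_of_true ‹_› (by decide)
      | exact iff_of_false ‹_› (by decide)
      | exact iff_of_false (G.irrefl) (by decide)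

/-- Each class of a complete multipartite partition is determined by any of its
members: it is the set of non-neighbours (within `F`) of that member. -/
lemma class_eq {G : SimpleGraph V} {F : Set V} {P : Set (Set V)} (h : IsCMP G F P)
    {E : Set V} {u : V} (hE : E ∈ P) (hu : u ∈ E) :
    E = {w | w ∈ F ∧ ¬ G.Adj u w} := by
  obtain ⟨h1, h2, h3, h4⟩ := h
  have huF : u ∈ F := (h1 E hE).2 hu
  ext w
  constructor
  · intro hw
    refine ⟨(h1 E hE).2 hw, fun hadj => ?_⟩
    exact ((h4 u huF w ((h1 E hE).2 hw)).mp hadj) ⟨E, hE, hu, hw⟩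
  · rintro ⟨hwF, hnadj⟩
    have hex : ∃ C ∈ P, u ∈ C ∧ w ∈ C := by
      by_contra hcon
      exact hnadj ((h4 u huF w hwF).mpr hcon)
    obtain ⟨C, hC, huC, hwC⟩ := hex
    have hCE : C = E := by
      by_contra hne
      exact (Set.disjoint_left.mp (h3 C hC E hE hne) huC) hu
    exact hCE ▸ hwC

/-- The complete multipartite partition of a given set `F` is unique. -/
lemma cmp_unique {G : SimpleGraph V} {F : Set V} {P1 P2 : Set (Set V)}
    (h1 : IsCMP G F P1) (h2 : IsCMP G F P2) : P1 = P2 := by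
  suffices aux : ∀ Q R : Set (Set V), IsCMP G F Q → IsCMP G F R → Q ⊆ R by
    exact subset_antisymm (aux _ _ h1 h2) (aux _ _ h2 h1)
  intro Q R hQ hR E hE
  obtain ⟨u, hu⟩ := (hQ.1 E hE).1
  have huF := (hQ.1 E hE).2 hu
  have hmem : u ∈ ⋃₀ R := by rw [hR.2.1]; exact huF
  obtain ⟨E', hE', huE'⟩ := hmem
  rw [class_eq hQ hE hu, ← class_eq hR hE' huE']
  exact hE'

/-- Among four pairwise distinct sets we can find two avoiding any two given sets. -/
lemma two_avoid (f : Fin 4 ↪ Set V) (a b : Set V) :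
    ∃ i j : Fin 4, f i ≠ f j ∧ f i ≠ a ∧ f i ≠ b ∧ f j ≠ a ∧ f j ≠ b := by
  classical
  have hone : ∀ c : Set V, (Finset.univ.filter (fun i : Fin 4 => f i = c)).card ≤ 1 := by
    intro c
    refine Finset.card_le_one.mpr ?_
    intro i hi j hj
    simp only [Finset.mem_filter] at hi hj
    exact f.injective (hi.2.trans hj.2.symm)
  have hsplit := Finset.card_filter_add_card_filter_not
    (s := (Finset.univ : Finset (Fin 4))) (p := fun i => f i = a ∨ f i = b)
  have hsub : (Finset.univ.filter (fun i : Fin 4 => f i = a ∨ f i = b)).card ≤ 2 := by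
    calc (Finset.univ.filter (fun i : Fin 4 => f i = a ∨ f i = b)).card
        ≤ ((Finset.univ.filter (fun i : Fin 4 => f i = a)) ∪
           (Finset.univ.filter (fun i : Fin 4 => f i = b))).card := by
          apply Finset.card_le_card
          intro i
          simp only [Finset.mem_filter, Finset.mem_union, Finset.mem_univ, true_and]
          tauto
      _ ≤ _ := Finset.card_union_le _ _
      _ ≤ 2 := by have := hone a; have := hone b; omega
  have hcard : 1 < (Finset.univ.filter (fun i : Fin 4 => ¬(f i = a ∨ f i = b))).card := by
    simp only [Finset.card_univ, Fintype.card_fin] at hsplit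
    omega
  obtain ⟨i, hi, j, hj, hij⟩ := Finset.one_lt_card.mp hcard
  simp only [Finset.mem_filter, not_or] at hi hj
  exact ⟨i, j, fun h => hij (f.injective h), hi.2.1, hi.2.2, hj.2.1, hj.2.2⟩

/-- In a prison-free graph `G`, if `F, F' ∈ cmd₄(G)` are disjoint,
then every `v ∈ F'` has neighbours in at most one class of `F`. -/
theorem cmd4_disjoint_structure {V : Type*} [Fintype V] (G : SimpleGraph V)
    (hG : PrisonFree G) (F F' : Set V)
    (hF : Cmd G Set.univ 4 F) (hF' : Cmd G Set.univ 4 F')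
    (hdisj : F ∩ F' = ∅) :
    ∀ v ∈ F', ∀ P : Set (Set V), IsCMP G F P → MeetsAtMostOneClass G P v := by
  classical
  intro v hv P hP
  rintro C hC D hD ⟨x, hxC, hvx⟩ ⟨y, hyD, hvy⟩
  by_contra hCD
  have hvF : v ∉ F := by
    intro h
    have : v ∈ F ∩ F' := ⟨h, hv⟩
    rw [hdisj] at this
    exact this
  have memF : ∀ {E : Set V} {w : V}, E ∈ P → w ∈ E → w ∈ F :=
    fun hE hw => (hP.1 _ hE).2 hw
  have adjDiff : ∀ {E E' : Set V} {s t : V}, E ∈ P → E' ∈ P → E ≠ E' →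
      s ∈ E → t ∈ E' → G.Adj s t := by
    intro E E' s t hE hE' hne hs ht
    rw [hP.2.2.2 s (memF hE hs) t (memF hE' ht)]
    rintro ⟨K, hK, hsK, htK⟩
    have hKE : K = E := by
      by_contra h
      exact (Set.disjoint_left.mp (hP.2.2.1 K hK E hE h) hsK) hs
    have hKE' : K = E' := by
      by_contra h
      exact (Set.disjoint_left.mp (hP.2.2.1 K hK E' hE' h) htK) ht
    exact hne (hKE.symm.trans hKE')
  have nonadjSame : ∀ {E : Set V} {s t : V}, E ∈ P → s ∈ E → t ∈ E → ¬ G.Adj s t := by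
    intro E s t hE hs ht hadj
    exact (hP.2.2.2 s (memF hE hs) t (memF hE ht)).mp hadj ⟨E, hE, hs, ht⟩
  have classOf : ∀ {w : V}, w ∈ F → ∃ E ∈ P, w ∈ E := by
    intro w hw
    have : w ∈ ⋃₀ P := by rw [hP.2.1]; exact hw
    exact this
  obtain ⟨-, ⟨P0, hP0, f4, hf4⟩, hmax⟩ := hF
  have hf4' : ∀ i, f4 i ∈ P := fun i => (cmp_unique hP0 hP) ▸ hf4 i
  have hnev : ∀ {w : V}, w ∈ F → v ≠ w := fun hw h => hvF (h ▸ hw)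
  -- Prison from two "good" and two "bad" classes, all distinct.
  have hP1 : ∀ {A B E1 E2 : Set V} {g1 g2 t1 t2 : V}, A ∈ P → B ∈ P → E1 ∈ P → E2 ∈ P →
      A ≠ B → A ≠ E1 → A ≠ E2 → B ≠ E1 → B ≠ E2 → E1 ≠ E2 →
      g1 ∈ A → g2 ∈ B → t1 ∈ E1 → t2 ∈ E2 →
      G.Adj v g1 → G.Adj v g2 → ¬ G.Adj v t1 → ¬ G.Adj v t2 → False := by
    intro A B E1 E2 g1 g2 t1 t2 hA hB hE1 hE2 hAB hAE1 hAE2 hBE1 hBE2 hE12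
      hg1 hg2 ht1 ht2 hvg1 hvg2 hvt1 hvt2
    exact prison_config hG (adjDiff hA hB hAB hg1 hg2) (adjDiff hA hE1 hAE1 hg1 ht1)
      (adjDiff hA hE2 hAE2 hg1 ht2) (adjDiff hB hE1 hBE1 hg2 ht1)
      (adjDiff hB hE2 hBE2 hg2 ht2) (adjDiff hE1 hE2 hE12 ht1 ht2)
      hvg1 hvg2 hvt1 hvt2 (hnev (memF hE1 ht1)) (hnev (memF hE2 ht2))
  -- Prison from a mixed class and two other good classes.
  have hP2 : ∀ {M O K : Set V} {s t o k : V}, M ∈ P → O ∈ P → K ∈ P →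
      M ≠ O → M ≠ K → O ≠ K → s ∈ M → t ∈ M → o ∈ O → k ∈ K →
      G.Adj v s → ¬ G.Adj v t → G.Adj v o → G.Adj v k → False := by
    intro M O K s t o k hM hO hK hMO hMK hOK hs ht ho hk hvs hvt hvo hvk
    refine prison_config hG (adjDiff hO hK hOK ho hk) (adjDiff hO hM hMO.symm ho hs)
      hvo.symm (adjDiff hK hM hMK.symm hk hs) hvk.symm hvs.symm
      (adjDiff hM hO hMO ht ho) (adjDiff hM hK hMK ht hk)
      (nonadjSame hM ht hs) (fun h => hvt h.symm) ?_ (hnev (memF hM ht)).symm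
    intro h
    exact hvt (h ▸ hvs)
  by_cases hmix : ∃ M ∈ P, (∃ s ∈ M, G.Adj v s) ∧ ∃ t ∈ M, ¬ G.Adj v t
  · -- a mixed class exists: find two other good classes or two bad classes
    obtain ⟨M, hM, ⟨s, hsM, hvs⟩, t, htM, hvt⟩ := hmix
    obtain ⟨O, hO, hMO, o, hoO, hvo⟩ : ∃ O ∈ P, M ≠ O ∧ ∃ o ∈ O, G.Adj v o := by
      by_cases hMC : M = C
      · exact ⟨D, hD, fun h => hCD (hMC ▸ h), y, hyD, hvy⟩
      · exact ⟨C, hC, hMC, x, hxC, hvx⟩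
    obtain ⟨i, j, hij, hiM, hiO, hjM, hjO⟩ := two_avoid f4 M O
    obtain ⟨k1, hk1⟩ := (hP.1 _ (hf4' i)).1
    obtain ⟨k2, hk2⟩ := (hP.1 _ (hf4' j)).1
    by_cases h1 : ∃ z ∈ f4 i, G.Adj v z
    · obtain ⟨z, hz, hvz⟩ := h1
      exact hP2 hM hO (hf4' i) hMO (Ne.symm hiM) (Ne.symm hiO) hsM htM hoO hz hvs hvt hvo hvz
    · push_neg at h1
      by_cases h2 : ∃ z ∈ f4 j, G.Adj v z
      · obtain ⟨z, hz, hvz⟩ := h2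
        exact hP2 hM hO (hf4' j) hMO (Ne.symm hjM) (Ne.symm hjO) hsM htM hoO hz hvs hvt hvo hvz
      · push_neg at h2
        exact hP1 hM hO (hf4' i) (hf4' j) hMO (Ne.symm hiM) (Ne.symm hjM) (Ne.symm hiO)
          (Ne.symm hjO) hij hsM hoO hk1 hk2 hvs hvo (h1 k1 hk1) (h2 k2 hk2)
  · push_neg at hmix
    -- no mixed class: every class with a neighbour of v is fully adjacent to v
    by_cases hbadpair : ∃ E1 ∈ P, ∃ E2 ∈ P, E1 ≠ E2 ∧ (∃ t1 ∈ E1, ¬ G.Adj v t1) ∧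
        ∃ t2 ∈ E2, ¬ G.Adj v t2
    · obtain ⟨E1, hE1, E2, hE2, hE12, ⟨t1, ht1, hvt1⟩, t2, ht2, hvt2⟩ := hbadpair
      have hCfull := hmix C hC ⟨x, hxC, hvx⟩
      have hDfull := hmix D hD ⟨y, hyD, hvy⟩
      have hCE1 : C ≠ E1 := fun h => hvt1 (hCfull t1 (h ▸ ht1))
      have hCE2 : C ≠ E2 := fun h => hvt2 (hCfull t2 (h ▸ ht2))
      have hDE1 : D ≠ E1 := fun h => hvt1 (hDfull t1 (h ▸ ht1))
      have hDE2 : D ≠ E2 := fun h => hvt2 (hDfull t2 (h ▸ ht2))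
      exact hP1 hC hD hE1 hE2 hCD hCE1 hCE2 hDE1 hDE2 hE12 hxC hyD ht1 ht2 hvx hvy hvt1 hvt2
    · push_neg at hbadpair
      -- at most one class contains non-neighbours of v; extend F by v
      by_cases hB : ∃ B ∈ P, ∃ t ∈ B, ¬ G.Adj v t
      · -- exactly one fully non-adjacent class B: add v to it
        obtain ⟨B, hBP, t0, ht0, hvt0⟩ := hB
        have hBbad : ∀ t ∈ B, ¬ G.Adj v t := by
          intro t ht hadj
          exact hvt0 (hmix B hBP ⟨t, ht, hadj⟩ t0 ht0)
        have hfull : ∀ E ∈ P, E ≠ B → ∀ w ∈ E, G.Adj v w := by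
          intro E hE hEB w hw
          exact hbadpair B hBP E hE (Ne.symm hEB) ⟨t0, ht0, hvt0⟩ w hw
        have memQv : ∀ {w' : V}, w' ∈ F → (w' ∈ B ∪ {v} ↔ w' ∈ B) := by
          intro w' hw'
          constructor
          · rintro (h | h)
            · exact h
            · have : w' = v := h
              exact absurd (this ▸ hw') hvF
          · exact Or.inl
        have hext : CMPAtLeast G (insert v F) 4 := by
          refine ⟨insert (B ∪ {v}) (P \ {B}), ⟨?_, ?_, ?_, ?_⟩, ?_⟩
          · rintro E (rfl | ⟨hE, hEB⟩)
            · refine ⟨⟨v, Or.inr rfl⟩, ?_⟩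
              rintro z (hz | hz)
              · exact Set.mem_insert_of_mem _ ((hP.1 B hBP).2 hz)
              · have : z = v := hz
                exact this ▸ Set.mem_insert v F
            · exact ⟨(hP.1 E hE).1, (hP.1 E hE).2.trans (Set.subset_insert _ _)⟩
          · ext z
            simp only [Set.sUnion_insert, Set.mem_union, Set.mem_sUnion, Set.mem_diff,
              Set.mem_singleton_iff, Set.mem_insert_iff]
            constructor
            · rintro ((hz | rfl) | ⟨E, ⟨hE, -⟩, hzE⟩)
              · exact Or.inr ((hP.1 B hBP).2 hz)
              · exact Or.inl rfl
              · exact Or.inr ((hP.1 E hE).2 hzE)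
            · rintro (rfl | hzF)
              · exact Or.inl (Or.inr rfl)
              · obtain ⟨E, hE, hzE⟩ := classOf hzF
                by_cases hEB : E = B
                · exact Or.inl (Or.inl (hEB ▸ hzE))
                · exact Or.inr ⟨E, ⟨hE, hEB⟩, hzE⟩
          · rintro E1 (rfl | ⟨h1, h1B⟩) E2 (rfl | ⟨h2, h2B⟩) hne
            · exact absurd rfl hne
            · refine Set.disjoint_union_left.mpr ⟨hP.2.2.1 B hBP E2 h2 (fun h => h2B h.symm), ?_⟩
              exact Set.disjoint_singleton_left.mpr (fun h => hvF ((hP.1 E2 h2).2 h))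
            · refine Set.disjoint_union_right.mpr ⟨hP.2.2.1 E1 h1 B hBP h1B, ?_⟩
              exact Set.disjoint_singleton_right.mpr (fun h => hvF ((hP.1 E1 h1).2 h))
            · exact hP.2.2.1 E1 h1 E2 h2 hne
          · intro u hu w hw
            rcases hu with hu1 | hu
            · rcases hw with hw1 | hw
              · rw [hu1, hw1]
                refine iff_of_false (G.irrefl) ?_
                intro h
                exact h ⟨B ∪ {v}, Set.mem_insert _ _, Or.inr rfl, Or.inr rfl⟩
              · rw [hu1]
                constructor
                · rintro hadj ⟨E, hE, h1, h2⟩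
                  rcases hE with rfl | ⟨hE, hEB⟩
                  · exact hBbad w ((memQv hw).mp h2) hadj
                  · exact hvF ((hP.1 E hE).2 h1)
                · intro hnex
                  obtain ⟨E, hE, hwE⟩ := classOf hw
                  by_cases hEB : E = B
                  · exact absurd ⟨B ∪ {v}, Set.mem_insert _ _, Or.inr rfl,
                      Or.inl (hEB ▸ hwE)⟩ hnex
                  · exact hfull E hE hEB w hwE
            · rcases hw with hw1 | hw
              · rw [hw1]
                constructor
                · rintro hadj ⟨E, hE, h1, h2⟩
                  rcases hE with rfl | ⟨hE, hEB⟩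
                  · exact hBbad u ((memQv hu).mp h1) hadj.symm
                  · exact hvF ((hP.1 E hE).2 h2)
                · intro hnex
                  obtain ⟨E, hE, huE⟩ := classOf hu
                  by_cases hEB : E = B
                  · exact absurd ⟨B ∪ {v}, Set.mem_insert _ _, Or.inl (hEB ▸ huE),
                      Or.inr rfl⟩ hnex
                  · exact (hfull E hE hEB u huE).symm
              · rw [hP.2.2.2 u hu w hw]
                apply not_congr
                constructor
                · rintro ⟨E, hE, h1, h2⟩
                  by_cases hEB : E = B
                  · exact ⟨B ∪ {v}, Set.mem_insert _ _, Or.inl (hEB ▸ h1), Or.inl (hEB ▸ h2)⟩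
                  · exact ⟨E, Set.mem_insert_of_mem _ ⟨hE, hEB⟩, h1, h2⟩
                · rintro ⟨E, (rfl | ⟨hE, -⟩), h1, h2⟩
                  · exact ⟨B, hBP, (memQv hu).mp h1, (memQv hw).mp h2⟩
                  · exact ⟨E, hE, h1, h2⟩
          · refine ⟨⟨fun i => if f4 i = B then B ∪ {v} else f4 i, ?_⟩, ?_⟩
            · intro i j h
              simp only at h
              by_cases hi : f4 i = B <;> by_cases hj : f4 j = B
              · exact f4.injective (hi.trans hj.symm)
              · rw [if_pos hi, if_neg hj] at h
                exact absurd ((hP.1 _ (hf4' j)).2 (h ▸ (Or.inr rfl : v ∈ B ∪ {v}))) hvF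
              · rw [if_neg hi, if_pos hj] at h
                exact absurd ((hP.1 _ (hf4' i)).2 (h.symm ▸ (Or.inr rfl : v ∈ B ∪ {v}))) hvF
              · rw [if_neg hi, if_neg hj] at h
                exact f4.injective h
            · intro i
              show (if f4 i = B then B ∪ {v} else f4 i) ∈ _
              by_cases hi : f4 i = B
              · rw [if_pos hi]
                exact Set.mem_insert _ _
              · rw [if_neg hi]
                exact Set.mem_insert_of_mem _ ⟨hf4' i, hi⟩
        have heq := hmax (insert v F) (Set.subset_univ _) (Set.subset_insert _ _) hext
        exact hvF (heq ▸ Set.mem_insert v F)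
      · -- v is adjacent to all of F: add {v} as a new class
        push_neg at hB
        have hall : ∀ w ∈ F, G.Adj v w := by
          intro w hw
          obtain ⟨E, hE, hwE⟩ := classOf hw
          exact hB E hE w hwE
        have hext : CMPAtLeast G (insert v F) 4 := by
          refine ⟨insert {v} P, ⟨?_, ?_, ?_, ?_⟩, f4, fun i => Set.mem_insert_of_mem _ (hf4' i)⟩
          · rintro E (rfl | hE)
            · refine ⟨⟨v, rfl⟩, ?_⟩
              intro z hz
              have : z = v := hz
              exact this ▸ Set.mem_insert v F
            · exact ⟨(hP.1 E hE).1, (hP.1 E hE).2.trans (Set.subset_insert _ _)⟩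
          · rw [Set.sUnion_insert, hP.2.1, Set.singleton_union]
          · rintro E1 (rfl | h1) E2 (rfl | h2) hne
            · exact absurd rfl hne
            · exact Set.disjoint_singleton_left.mpr (fun h => hvF ((hP.1 E2 h2).2 h))
            · exact Set.disjoint_singleton_right.mpr (fun h => hvF ((hP.1 E1 h1).2 h))
            · exact hP.2.2.1 E1 h1 E2 h2 hne
          · intro u hu w hw
            rcases hu with hu1 | hu
            · rcases hw with hw1 | hw
              · rw [hu1, hw1]
                exact iff_of_false (G.irrefl) (fun h => h ⟨{v}, Set.mem_insert _ _, rfl, rfl⟩)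
              · rw [hu1]
                refine iff_of_true (hall w hw) ?_
                rintro ⟨E, hE, h1, h2⟩
                rcases hE with rfl | hE
                · have : w = v := h2
                  exact hvF (this ▸ hw)
                · exact hvF ((hP.1 E hE).2 h1)
            · rcases hw with hw1 | hw
              · rw [hw1]
                refine iff_of_true (hall u hu).symm ?_
                rintro ⟨E, hE, h1, h2⟩
                rcases hE with rfl | hE
                · have : u = v := h1
                  exact hvF (this ▸ hu)
                · exact hvF ((hP.1 E hE).2 h2)
              · rw [hP.2.2.2 u hu w hw]
                apply not_congr
                constructor
                · rintro ⟨E, hE, h1, h2⟩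
                  exact ⟨E, Set.mem_insert_of_mem _ hE, h1, h2⟩
                · rintro ⟨E, (rfl | hE), h1, h2⟩
                  · have : u = v := h1
                    exact absurd (this ▸ hu) hvF
                  · exact ⟨E, hE, h1, h2⟩
        have heq := hmax (insert v F) (Set.subset_univ _) (Set.subset_insert _ _) hext
        exact hvF (heq ▸ Set.mem_insert v F)

end PrisonFreePaper
end

section
/- Let G be a graph and S⊆V(G) a set satisfying (H1) and (H2). Let P be a supergraph of a prison in G that contains an edge with both endpoints in F for some F ∈ cmd_3(G−S). Then P ⊆ S∪F. -/
namespace PrisonFreePaper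

variable {V : Type*}

section Helpers

variable {V : Type*} {G : SimpleGraph V} {S F : Set V}

lemma IsCMP.mem_F {P : Set (Set V)} (h : IsCMP G F P) {C : Set V} (hC : C ∈ P)
    {u : V} (hu : u ∈ C) : u ∈ F :=
  (h.1 C hC).2 hu

lemma IsCMP.exists_class {P : Set (Set V)} (h : IsCMP G F P) {u : V} (hu : u ∈ F) :
    ∃ C ∈ P, u ∈ C := by
  have := h.2.1
  rw [← this] at hu
  obtain ⟨C, hC, huC⟩ := hu
  exact ⟨C, hC, huC⟩

lemma IsCMP.adj_of_ne {P : Set (Set V)} (h : IsCMP G F P) {C D : Set V} (hC : C ∈ P)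
    (hD : D ∈ P) (hCD : C ≠ D) {u v : V} (hu : u ∈ C) (hv : v ∈ D) : G.Adj u v := by
  rw [h.2.2.2 u (h.mem_F hC hu) v (h.mem_F hD hv)]
  rintro ⟨E, hE, huE, hvE⟩
  have hEC : E = C := by
    by_contra hne
    exact Set.disjoint_left.mp (h.2.2.1 E hE C hC hne) huE hu
  have hED : E = D := by
    by_contra hne
    exact Set.disjoint_left.mp (h.2.2.1 E hE D hD hne) hvE hv
  exact hCD (hEC ▸ hED)

lemma IsCMP.not_adj_same {P : Set (Set V)} (h : IsCMP G F P) {C : Set V} (hC : C ∈ P)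
    {u v : V} (hu : u ∈ C) (hv : v ∈ C) : ¬ G.Adj u v := fun hadj =>
  (h.2.2.2 u (h.mem_F hC hu) v (h.mem_F hC hv)).mp hadj ⟨C, hC, hu, hv⟩

/-- From (H2): there is no induced prison in `G` having three vertices outside `S`.
The prison consists of a 4-clique `a b c d` plus `e` adjacent exactly to `a, b`. -/
lemma prison_contra (h2 : H2 G S) {a b c d e : V}
    (hab : G.Adj a b) (hac : G.Adj a c) (had : G.Adj a d)
    (hbc : G.Adj b c) (hbd : G.Adj b d) (hcd : G.Adj c d)
    (hea : G.Adj e a) (heb : G.Adj e b) (hec : ¬ G.Adj e c) (hed : ¬ G.Adj e d)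
    (hec' : e ≠ c) (hed' : e ≠ d)
    (x1 x2 x3 : V)
    (hm1 : x1 ∈ ({a,b,c,d,e} : Set V)) (hm2 : x2 ∈ ({a,b,c,d,e} : Set V))
    (hm3 : x3 ∈ ({a,b,c,d,e} : Set V))
    (h12 : x1 ≠ x2) (h13 : x1 ≠ x3) (h23 : x2 ≠ x3)
    (hs1 : x1 ∉ S) (hs2 : x2 ∉ S) (hs3 : x3 ∉ S) : False := by
  have hba := hab.symm; have hca := hac.symm; have hda := had.symm
  have hcb := hbc.symm; have hdb := hbd.symm; have hdc := hcd.symm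
  have hae := hea.symm; have hbe := heb.symm
  have hce : ¬ G.Adj c e := fun h => hec h.symm
  have hde : ¬ G.Adj d e := fun h => hed h.symm
  have nab : a ≠ b := hab.ne
  have nac : a ≠ c := hac.ne
  have nad : a ≠ d := had.ne
  have nbc : b ≠ c := hbc.ne
  have nbd : b ≠ d := hbd.ne
  have ncd : c ≠ d := hcd.ne
  have nea : e ≠ a := hea.ne
  have neb : e ≠ b := heb.ne
  have nba := nab.symm; have nca := nac.symm; have nda := nad.symm
  have ncb := nbc.symm; have ndb := nbd.symm; have ndc := ncd.symm
  have nae := nea.symm; have nbe := neb.symm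
  have nce := hec'.symm; have nde := hed'.symm
  have hinj : Function.Injective ![a,b,c,d,e] := by
    intro i j hij
    fin_cases i <;> fin_cases j <;> first
      | rfl
      | (exfalso; simp only [Matrix.cons_val_zero, Matrix.cons_val_one, Matrix.head_cons,
          Matrix.cons_val_two, Matrix.tail_cons, Matrix.cons_val_three,
          Matrix.cons_val_four, Matrix.cons_val_succ] at hij; simp_all)
  have hrange : Set.range ![a,b,c,d,e] = ({a,b,c,d,e} : Set V) := by
    ext t
    constructor
    · rintro ⟨i, rfl⟩
      fin_cases i <;> simp
    · intro ht
      rcases ht with rfl | rfl | rfl | rfl | rfl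
      · exact ⟨0, rfl⟩
      · exact ⟨1, rfl⟩
      · exact ⟨2, rfl⟩
      · exact ⟨3, rfl⟩
      · exact ⟨4, rfl⟩
  have hiff : ∀ i j, G.Adj (![a,b,c,d,e] i) (![a,b,c,d,e] j) ↔ prison.Adj i j := by
    intro i j
    fin_cases i <;> fin_cases j <;>
      first
      | exact iff_of_false (fun h => G.ne_of_adj h rfl) (fun h => h.1 rfl)
      | exact iff_of_false (by assumption) (fun h => h.2 (by decide))
      | exact iff_of_true (by assumption) ⟨by decide, by decide⟩
  have hip : InducesPrison G ({a,b,c,d,e} : Set V) := ⟨⟨![a,b,c,d,e], hinj⟩, hrange, hiff⟩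
  obtain ⟨e₁, e₂, hne, he1, he2⟩ := h2 _ hip
  revert hne he1 he2
  induction e₁ using Sym2.ind with | _ u1 v1 =>
  induction e₂ using Sym2.ind with | _ u2 v2 =>
  intro hne he1 he2
  rw [edgesWithin, SimpleGraph.mem_edgeSet] at he1 he2
  obtain ⟨hadj1, hu1, hv1⟩ := he1
  obtain ⟨hadj2, hu2, hv2⟩ := he2
  set Q : Set V := {a,b,c,d,e} with hQdef
  have hQfin : Q.Finite := Set.toFinite _
  have hQ5 : Q.ncard = 5 := by
    rw [hQdef]
    rw [Set.ncard_insert_of_notMem (by simp [nab, nac, nad, nae])]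
    rw [Set.ncard_insert_of_notMem (by simp [nbc, nbd, nbe])]
    rw [Set.ncard_insert_of_notMem (by simp [ncd, nce])]
    rw [Set.ncard_insert_of_notMem (by simp [nde])]
    rw [Set.ncard_singleton]
  have hsubX : ({x1,x2,x3} : Set V) ⊆ Q := by
    rw [Set.insert_subset_iff, Set.insert_subset_iff, Set.singleton_subset_iff]
    exact ⟨hm1, hm2, hm3⟩
  have hX3 : ({x1,x2,x3} : Set V).ncard = 3 := by
    rw [Set.ncard_insert_of_notMem (by simp [h12, h13])]
    rw [Set.ncard_insert_of_notMem (by simp [h23])]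
    rw [Set.ncard_singleton]
  have hdiff : (Q \ {x1,x2,x3}).ncard = 2 := by
    rw [Set.ncard_diff hsubX (Set.toFinite _), hQ5, hX3]
  have hQS : Q ∩ S ⊆ Q \ {x1,x2,x3} := by
    rintro t ⟨htQ, htS⟩
    refine ⟨htQ, ?_⟩
    rintro (rfl | rfl | rfl)
    · exact hs1 htS
    · exact hs2 htS
    · exact hs3 htS
  have hQS2 : (Q ∩ S).ncard ≤ 2 := hdiff ▸ Set.ncard_le_ncard hQS hQfin.diff
  have hp1 : ({u1, v1} : Set V) ⊆ Q ∩ S := by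
    rw [Set.insert_subset_iff, Set.singleton_subset_iff]
    exact ⟨hu1, hv1⟩
  have hp2 : ({u2, v2} : Set V) ⊆ Q ∩ S := by
    rw [Set.insert_subset_iff, Set.singleton_subset_iff]
    exact ⟨hu2, hv2⟩
  have hc1 : ({u1, v1} : Set V).ncard = 2 := Set.ncard_pair hadj1.ne
  have hc2 : ({u2, v2} : Set V).ncard = 2 := Set.ncard_pair hadj2.ne
  have heq1 : ({u1, v1} : Set V) = Q ∩ S :=
    Set.eq_of_subset_of_ncard_le hp1 (by rw [hc1]; exact hQS2) (hQfin.inter_of_left _)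
  have heq2 : ({u2, v2} : Set V) = Q ∩ S :=
    Set.eq_of_subset_of_ncard_le hp2 (by rw [hc2]; exact hQS2) (hQfin.inter_of_left _)
  have : ({u1, v1} : Set V) = {u2, v2} := heq1.trans heq2.symm
  rw [Set.pair_eq_pair_iff] at this
  exact hne (Sym2.eq_iff.mpr this)

end Helpers
section Helpers2

variable {V : Type*} {G : SimpleGraph V} {S F : Set V}

/-- If `z ∉ F` is adjacent to everything in `F`, then `F` is not maximal. -/
lemma cmd_not_adj_all (hF : Cmd G Sᶜ 3 F) {P : Set (Set V)} (hP : IsCMP G F P)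
    (hf : ∃ f : Fin 3 ↪ Set V, ∀ i, f i ∈ P)
    {z : V} (hzS : z ∉ S) (hzF : z ∉ F) (hall : ∀ t ∈ F, G.Adj z t) : False := by
  classical
  obtain ⟨hFS, -, hmax⟩ := hF
  have hkey : CMPAtLeast G (insert z F) 3 := by
    refine ⟨insert {z} P, ⟨?_, ?_, ?_, ?_⟩, ?_⟩
    · rintro C (rfl | hC)
      · exact ⟨⟨z, rfl⟩, by simp⟩
      · exact ⟨(hP.1 C hC).1, (hP.1 C hC).2.trans (Set.subset_insert _ _)⟩
    · rw [Set.sUnion_insert, hP.2.1, Set.singleton_union]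
    · rintro C (rfl | hC) D (rfl | hD) hne
      · exact absurd rfl hne
      · exact Set.disjoint_left.mpr (by rintro t rfl htD; exact hzF (hP.mem_F hD htD))
      · exact Set.disjoint_right.mpr (by rintro t rfl htC; exact hzF (hP.mem_F hC htC))
      · exact hP.2.2.1 C hC D hD hne
    · intro u hu v hv
      rcases Set.mem_insert_iff.mp hu with hu' | hu'
      · rcases Set.mem_insert_iff.mp hv with hv' | hv'
        · rw [hu', hv']
          exact iff_of_false (G.irrefl) (fun h => h ⟨{z}, Or.inl rfl, rfl, rfl⟩)
        · rw [hu']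
          refine iff_of_true (hall v hv') ?_
          rintro ⟨C, rfl | hC, h1, h2⟩
          · exact hzF ((Set.eq_of_mem_singleton h2) ▸ hv')
          · exact hzF (hP.mem_F hC h1)
      · rcases Set.mem_insert_iff.mp hv with hv' | hv'
        · rw [hv']
          refine iff_of_true (hall u hu').symm ?_
          rintro ⟨C, rfl | hC, h1, h2⟩
          · exact hzF ((Set.eq_of_mem_singleton h1) ▸ hu')
          · exact hzF (hP.mem_F hC h2)
        · rw [hP.2.2.2 u hu' v hv']
          apply not_congr
          constructor
          · rintro ⟨C, hC, h1, h2⟩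
            exact ⟨C, Or.inr hC, h1, h2⟩
          · rintro ⟨C, rfl | hC, h1, h2⟩
            · exact absurd ((Set.eq_of_mem_singleton h1) ▸ hu') hzF
            · exact ⟨C, hC, h1, h2⟩
    · obtain ⟨f, hfm⟩ := hf
      exact ⟨f, fun i => Or.inr (hfm i)⟩
  have heq := hmax (insert z F) (Set.insert_subset hzS hFS) (Set.subset_insert _ _) hkey
  exact hzF (heq ▸ Set.mem_insert z F)

/-- If `z ∉ F` is adjacent to everything in `F` except the class `C`, to which it is
completely non-adjacent, then `F` is not maximal. -/
lemma cmd_not_ext_class (hF : Cmd G Sᶜ 3 F) {P : Set (Set V)} (hP : IsCMP G F P)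
    (hf : ∃ f : Fin 3 ↪ Set V, ∀ i, f i ∈ P)
    {z : V} (hzS : z ∉ S) (hzF : z ∉ F)
    {C : Set V} (hC : C ∈ P) (hnon : ∀ t ∈ C, ¬ G.Adj z t)
    (hadj : ∀ t ∈ F, t ∉ C → G.Adj z t) : False := by
  classical
  obtain ⟨hFS, -, hmax⟩ := hF
  have hCF : C ⊆ F := (hP.1 C hC).2
  have hkey : CMPAtLeast G (insert z F) 3 := by
    refine ⟨insert (insert z C) (P \ {C}), ⟨?_, ?_, ?_, ?_⟩, ?_⟩
    · rintro D (rfl | hD)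
      · exact ⟨⟨z, Set.mem_insert _ _⟩, Set.insert_subset_insert hCF⟩
      · exact ⟨(hP.1 D hD.1).1, ((hP.1 D hD.1).2).trans (Set.subset_insert _ _)⟩
    · rw [Set.sUnion_insert]
      have hrest : C ∪ ⋃₀ (P \ {C}) = F := by
        apply Set.Subset.antisymm
        · apply Set.union_subset hCF
          intro t ⟨D, hD, htD⟩
          exact hP.mem_F hD.1 htD
        · intro t htF
          obtain ⟨D, hD, htD⟩ := hP.exists_class htF
          by_cases hDC : D = C
          · exact Or.inl (hDC ▸ htD)
          · exact Or.inr ⟨D, ⟨hD, hDC⟩, htD⟩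
      rw [Set.insert_union, hrest]
    · rintro D (rfl | hD) E (rfl | hE) hne
      · exact absurd rfl hne
      · refine Set.disjoint_left.mpr ?_
        rintro t (rfl | htC) htE
        · exact hzF (hP.mem_F hE.1 htE)
        · exact Set.disjoint_left.mp (hP.2.2.1 C hC E hE.1 (fun h => hE.2 h.symm)) htC htE
      · refine Set.disjoint_right.mpr ?_
        rintro t (rfl | htC) htD
        · exact hzF (hP.mem_F hD.1 htD)
        · exact Set.disjoint_left.mp (hP.2.2.1 C hC D hD.1 (fun h => hD.2 h.symm)) htC htD
      · exact hP.2.2.1 D hD.1 E hE.1 hne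
    · intro u hu v hv
      have hmemiff : ∀ t ∈ F, ((∃ D ∈ insert (insert z C) (P \ {C}), z ∈ D ∧ t ∈ D) ↔ t ∈ C) := by
        intro t htF
        constructor
        · rintro ⟨D, rfl | hD, h1, h2⟩
          · rcases h2 with rfl | h2
            · exact absurd htF hzF
            · exact h2
          · exact absurd (hP.mem_F hD.1 h1) hzF
        · intro htC
          exact ⟨insert z C, Or.inl rfl, Set.mem_insert _ _, Or.inr htC⟩
      rcases Set.mem_insert_iff.mp hu with hu' | hu'
      · rcases Set.mem_insert_iff.mp hv with hv' | hv'
        · rw [hu', hv']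
          exact iff_of_false (G.irrefl)
            (fun h => h ⟨insert z C, Or.inl rfl, Set.mem_insert _ _, Set.mem_insert _ _⟩)
        · rw [hu']
          constructor
          · intro hadj' hex
            exact hnon v ((hmemiff v hv').mp hex) hadj'
          · intro hnex
            refine hadj v hv' (fun hvC => hnex ((hmemiff v hv').mpr hvC))
      · rcases Set.mem_insert_iff.mp hv with hv' | hv'
        · rw [hv']
          constructor
          · intro hadj' hex
            have : u ∈ C := by
              obtain ⟨D, hD, h1, h2⟩ := hex
              exact (hmemiff u hu').mp ⟨D, hD, h2, h1⟩
            exact hnon u this hadj'.symm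
          · intro hnex
            refine (hadj u hu' (fun huC => hnex ?_)).symm
            obtain ⟨D, hD, h1, h2⟩ := (hmemiff u hu').mpr huC
            exact ⟨D, hD, h2, h1⟩
        · rw [hP.2.2.2 u hu' v hv']
          apply not_congr
          constructor
          · rintro ⟨D, hD, h1, h2⟩
            by_cases hDC : D = C
            · exact ⟨insert z C, Or.inl rfl, Or.inr (hDC ▸ h1), Or.inr (hDC ▸ h2)⟩
            · exact ⟨D, Or.inr ⟨hD, hDC⟩, h1, h2⟩
          · rintro ⟨D, rfl | hD, h1, h2⟩
            · rcases h1 with rfl | h1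
              · exact absurd hu' hzF
              · rcases h2 with rfl | h2
                · exact absurd hv' hzF
                · exact ⟨C, hC, h1, h2⟩
            · exact ⟨D, hD.1, h1, h2⟩
    · obtain ⟨f, hfm⟩ := hf
      refine ⟨⟨fun i => if f i = C then insert z C else f i, ?_⟩, ?_⟩
      · intro i j hij
        by_cases hfi : f i = C <;> by_cases hfj : f j = C
        · exact f.injective (hfi.trans hfj.symm)
        · exfalso
          simp only [if_pos hfi, if_neg hfj] at hij
          exact hzF ((hP.1 (f j) (hfm j)).2 (hij ▸ Set.mem_insert z C))
        · exfalso
          simp only [if_pos hfj, if_neg hfi] at hij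
          exact hzF ((hP.1 (f i) (hfm i)).2 (hij.symm ▸ Set.mem_insert z C))
        · simp only [if_neg hfi, if_neg hfj] at hij
          exact f.injective hij
      · intro i
        show (if f i = C then insert z C else f i) ∈ insert (insert z C) (P \ {C})
        by_cases hfi : f i = C
        · rw [if_pos hfi]; exact Or.inl rfl
        · rw [if_neg hfi]; exact Or.inr ⟨hfm i, hfi⟩
  have heq := hmax (insert z F) (Set.insert_subset hzS hFS) (Set.subset_insert _ _) hkey
  exact hzF (heq ▸ Set.mem_insert z F)

lemma third_class {P : Set (Set V)} (hf : ∃ f : Fin 3 ↪ Set V, ∀ i, f i ∈ P)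
    (A B : Set V) : ∃ C ∈ P, C ≠ A ∧ C ≠ B := by
  obtain ⟨f, hm⟩ := hf
  by_contra h
  push_neg at h
  have key : ∀ i : Fin 3, f i = A ∨ f i = B := by
    intro i
    by_cases hA : f i = A
    · exact Or.inl hA
    · exact Or.inr (h (f i) (hm i) hA)
  rcases key 0 with h0 | h0 <;> rcases key 1 with h1 | h1 <;> rcases key 2 with h2 | h2 <;>
    first
    | exact absurd (f.injective (h0.trans h1.symm)) (by decide)
    | exact absurd (f.injective (h0.trans h2.symm)) (by decide)
    | exact absurd (f.injective (h1.trans h2.symm)) (by decide)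

/-- From (H1): every edge of `G` with an endpoint outside `S` extends to a `K₄`. -/
lemma exists_K4_of_edge (h1 : H1 G S) {a b : V} (hab : G.Adj a b) (haS : a ∉ S) :
    ∃ s t : V, G.Adj a s ∧ G.Adj a t ∧ G.Adj b s ∧ G.Adj b t ∧ G.Adj s t := by
  obtain ⟨Q, ⟨hQ5, u₀, v₀, hrule⟩, haQ, hbQ⟩ := h1 a b hab (fun h => haS h.1)
  have hQfin : Q.Finite := by
    rcases Q.finite_or_infinite with h | h
    · exact h
    · rw [h.ncard] at hQ5; exact absurd hQ5 (by norm_num)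
  have hsub : ({a, b} : Set V) ⊆ Q := by
    rw [Set.insert_subset_iff, Set.singleton_subset_iff]; exact ⟨haQ, hbQ⟩
  have hR : (Q \ {a, b}).ncard = 3 := by
    rw [Set.ncard_diff hsub (Set.toFinite _), hQ5, Set.ncard_pair hab.ne]
  obtain ⟨r1, r2, r3, h12, h13, h23, hReq⟩ := Set.ncard_eq_three.mp hR
  have hr : ∀ x ∈ ({r1, r2, r3} : Set V), x ∈ Q ∧ x ≠ a ∧ x ≠ b := by
    intro x hx
    rw [← hReq] at hx
    refine ⟨hx.1, fun h => hx.2 (by simp [h]), fun h => hx.2 (by simp [h])⟩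
  have key : ∀ x, x ∈ Q → x ∉ ({u₀, v₀} : Set V) → ∀ y ∈ Q, x ≠ y → G.Adj x y := by
    intro x hx hxm y hy hxy
    by_contra hna
    rcases hrule x hx y hy hxy hna with ⟨rfl, -⟩ | ⟨rfl, -⟩
    · exact hxm (Set.mem_insert _ _)
    · exact hxm (Or.inr rfl)
  have finish : ∀ s t : V, s ∈ ({r1, r2, r3} : Set V) → t ∈ ({r1, r2, r3} : Set V) → s ≠ t →
      s ∉ ({u₀, v₀} : Set V) → t ∉ ({u₀, v₀} : Set V) →
      ∃ s' t' : V, G.Adj a s' ∧ G.Adj a t' ∧ G.Adj b s' ∧ G.Adj b t' ∧ G.Adj s' t' := by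
    intro s t hsR htR hst hsB htB
    obtain ⟨hsQ, hsa, hsb⟩ := hr s hsR
    obtain ⟨htQ, hta, htb⟩ := hr t htR
    exact ⟨s, t, (key s hsQ hsB a haQ hsa).symm, (key t htQ htB a haQ hta).symm,
      (key s hsQ hsB b hbQ hsb).symm, (key t htQ htB b hbQ htb).symm, key s hsQ hsB t htQ hst⟩
  by_cases hc : u₀ ∈ ({r1, r2, r3} : Set V) ∧ v₀ ∈ ({r1, r2, r3} : Set V)
  · -- both endpoints of the potential non-edge lie outside {a,b}; pick s ∉ {u₀,v₀}, t := u₀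
    have hau : a ∉ ({u₀, v₀} : Set V) := by
      rintro (rfl | rfl)
      · exact (hr _ hc.1).2.1 rfl
      · exact (hr _ hc.2).2.1 rfl
    have hbu : b ∉ ({u₀, v₀} : Set V) := by
      rintro (rfl | rfl)
      · exact (hr _ hc.1).2.2 rfl
      · exact (hr _ hc.2).2.2 rfl
    have hex : ∃ s ∈ ({r1, r2, r3} : Set V), s ∉ ({u₀, v₀} : Set V) := by
      by_contra hno
      push_neg at hno
      have m1 := hno r1 (by simp)
      have m2 := hno r2 (by simp)
      have m3 := hno r3 (by simp)
      rcases m1 with e1 | e1 <;> rcases m2 with e2 | e2 <;> rcases m3 with e3 | e3 <;>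
        first
        | exact h12 (e1.trans e2.symm)
        | exact h13 (e1.trans e3.symm)
        | exact h23 (e2.trans e3.symm)
    obtain ⟨s, hsR, hsB⟩ := hex
    obtain ⟨hsQ, hsa, hsb⟩ := hr s hsR
    obtain ⟨huQ, hua, hub⟩ := hr u₀ hc.1
    have hsu : s ≠ u₀ := fun h => hsB (by simp [h])
    refine ⟨s, u₀, (key s hsQ hsB a haQ hsa).symm, ?_, (key s hsQ hsB b hbQ hsb).symm, ?_,
      key s hsQ hsB u₀ huQ hsu⟩
    · exact key a haQ hau u₀ huQ (fun h => hua h.symm)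
    · exact key b hbQ hbu u₀ huQ (fun h => hub h.symm)
  · -- at most one of u₀, v₀ lies among r1,r2,r3: two of the rᵢ avoid {u₀,v₀}
    have hcontra : ∀ x y : V, x ∈ ({r1, r2, r3} : Set V) → y ∈ ({r1, r2, r3} : Set V) →
        x ≠ y → x ∈ ({u₀, v₀} : Set V) → y ∈ ({u₀, v₀} : Set V) → False := by
      rintro x y hxR hyR hxy (rfl | rfl) (rfl | rfl)
      · exact hxy rfl
      · exact hc ⟨hxR, hyR⟩
      · exact hc ⟨hyR, hxR⟩
      · exact hxy rfl
    by_cases m1 : r1 ∈ ({u₀, v₀} : Set V)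
    · by_cases m2 : r2 ∈ ({u₀, v₀} : Set V)
      · exact absurd (hcontra r1 r2 (by simp) (by simp) h12 m1 m2) (fun h => h)
      · by_cases m3 : r3 ∈ ({u₀, v₀} : Set V)
        · exact absurd (hcontra r1 r3 (by simp) (by simp) h13 m1 m3) (fun h => h)
        · exact finish r2 r3 (by simp) (by simp) h23 m2 m3
    · by_cases m2 : r2 ∈ ({u₀, v₀} : Set V)
      · by_cases m3 : r3 ∈ ({u₀, v₀} : Set V)
        · exact absurd (hcontra r2 r3 (by simp) (by simp) h23 m2 m3) (fun h => h)
        · exact finish r1 r3 (by simp) (by simp) h13 m1 m3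
      · exact finish r1 r2 (by simp) (by simp) h12 m1 m2
  
end Helpers2
section Helpers3

variable {V : Type*} {G : SimpleGraph V} {S F : Set V}

lemma no_two_class_core (h1 : H1 G S) (h2 : H2 G S) (hF : Cmd G Sᶜ 3 F)
    {P : Set (Set V)} (hP : IsCMP G F P) (hf : ∃ f : Fin 3 ↪ Set V, ∀ i, f i ∈ P)
    {z : V} (hzS : z ∉ S) (hzF : z ∉ F)
    {A B : Set V} (hA : A ∈ P) (hB : B ∈ P) (hAB : A ≠ B)
    {a b : V} (ha : a ∈ A) (hb : b ∈ B) (hza : G.Adj z a) (hzb : G.Adj z b)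
    {n : V} (hn : n ∈ A) (hzn : ¬ G.Adj z n)
    (hOnly : ∀ E ∈ P, E ≠ A → E ≠ B → ∀ e ∈ E, ¬ G.Adj z e) : False := by
  obtain ⟨C₃, hC₃, hC₃A, hC₃B⟩ := third_class hf A B
  obtain ⟨c, hc⟩ := (hP.1 C₃ hC₃).1
  have hzc : ¬ G.Adj z c := hOnly C₃ hC₃ hC₃A hC₃B c hc
  have hFS : F ⊆ Sᶜ := hF.1
  have haF := hP.mem_F hA ha
  have hbF := hP.mem_F hB hb
  have hnF := hP.mem_F hA hn
  have hcF := hP.mem_F hC₃ hc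
  have haS : a ∉ S := hFS haF
  have hbS : b ∉ S := hFS hbF
  have hnS : n ∉ S := hFS hnF
  have hcS : c ∉ S := hFS hcF
  have hab : G.Adj a b := hP.adj_of_ne hA hB hAB ha hb
  have hnb : G.Adj n b := hP.adj_of_ne hA hB hAB hn hb
  have hac : G.Adj a c := hP.adj_of_ne hA hC₃ (Ne.symm hC₃A) ha hc
  have hbc : G.Adj b c := hP.adj_of_ne hB hC₃ (Ne.symm hC₃B) hb hc
  have hnc : G.Adj n c := hP.adj_of_ne hA hC₃ (Ne.symm hC₃A) hn hc
  have hna : ¬ G.Adj n a := hP.not_adj_same hA hn ha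
  have hz_ne_a : z ≠ a := fun h => hzF (h ▸ haF)
  have hz_ne_b : z ≠ b := fun h => hzF (h ▸ hbF)
  have hz_ne_c : z ≠ c := fun h => hzF (h ▸ hcF)
  have hz_ne_n : z ≠ n := fun h => hzF (h ▸ hnF)
  have hn_ne_a : n ≠ a := fun h => hzn (h ▸ hza)
  obtain ⟨s, t, has, hat, hbs, hbt, hst⟩ := exists_K4_of_edge h1 hab haS
  have hT : ∃ t₀, G.Adj t₀ a ∧ G.Adj t₀ b ∧ G.Adj t₀ z := by
    by_cases hzs : z = s
    · exact ⟨t, hat.symm, hbt.symm, (hzs ▸ hst : G.Adj z t).symm⟩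
    by_cases hzt : z = t
    · exact ⟨s, has.symm, hbs.symm, (hzt ▸ hst : G.Adj s z)⟩
    by_cases hzs2 : G.Adj z s
    · exact ⟨s, has.symm, hbs.symm, hzs2.symm⟩
    by_cases hzt2 : G.Adj z t
    · exact ⟨t, hat.symm, hbt.symm, hzt2.symm⟩
    exact absurd (prison_contra h2 hab has hat hbs hbt hst hza hzb hzs2 hzt2 hzs hzt
      a b z (by simp) (by simp) (by simp) hab.ne (Ne.symm hz_ne_a) (Ne.symm hz_ne_b)
      haS hbS hzS) (fun h => h)
  obtain ⟨t₀, hta, htb, htz⟩ := hT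
  by_cases htc : G.Adj t₀ c
  · by_cases htn : G.Adj t₀ n
    · -- prison on K4 {b, t₀, c, n} with fifth vertex z adjacent to b, t₀
      exact prison_contra h2 htb.symm hbc hnb.symm htc htn hnc.symm
        hzb htz.symm hzc hzn hz_ne_c hz_ne_n
        b c n (by simp) (by simp) (by simp) hbc.ne (hnb.ne') (Ne.symm hnc.ne)
        hbS hcS hnS
    · -- prison on K4 {b, c, a, t₀} with fifth vertex n adjacent to b, c
      exact prison_contra h2 hbc hab.symm htb.symm hac.symm htc.symm hta.symm
        hnb hnc hna (fun h => htn h.symm) hn_ne_a (fun h => hzn (by rw [h]; exact htz.symm))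
        b c n (by simp) (by simp) (by simp) hbc.ne (hnb.ne') (Ne.symm hnc.ne)
        hbS hcS hnS
  · -- prison on K4 {a, b, z, t₀} with fifth vertex c adjacent to a, b
    exact prison_contra h2 hab hza.symm hta.symm hzb.symm htb.symm htz.symm
      hac.symm hbc.symm (fun h => hzc h.symm) (fun h => htc h.symm)
      (Ne.symm hz_ne_c) (fun h => hzc (by rw [h]; exact htz.symm))
      a b c (by simp) (by simp) (by simp) hab.ne hac.ne hbc.ne
      haS hbS hcS

/-- Lemma A: a vertex outside `S ∪ F` cannot have neighbours in two distinct
classes of `F`. -/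
lemma no_two_class (h1 : H1 G S) (h2 : H2 G S) (hF : Cmd G Sᶜ 3 F)
    {P : Set (Set V)} (hP : IsCMP G F P) (hf : ∃ f : Fin 3 ↪ Set V, ∀ i, f i ∈ P)
    {z : V} (hzS : z ∉ S) (hzF : z ∉ F)
    {A B : Set V} (hA : A ∈ P) (hB : B ∈ P) (hAB : A ≠ B)
    {a b : V} (ha : a ∈ A) (hb : b ∈ B) (hza : G.Adj z a) (hzb : G.Adj z b) : False := by
  have hFS : F ⊆ Sᶜ := hF.1
  by_cases hM : ∃ C ∈ P, (∃ m ∈ C, G.Adj z m) ∧ ∃ n ∈ C, ¬ G.Adj z n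
  · obtain ⟨C, hC, ⟨m, hm, hzm⟩, ⟨n, hn, hzn⟩⟩ := hM
    by_cases h2c : ∃ A' ∈ P, A' ≠ C ∧ ∃ B' ∈ P, B' ≠ C ∧ B' ≠ A' ∧
        (∃ a' ∈ A', G.Adj z a') ∧ ∃ b' ∈ B', G.Adj z b'
    · obtain ⟨A', hA', hA'C, B', hB', hB'C, hB'A', ⟨a', ha', hza'⟩, ⟨b', hb', hzb'⟩⟩ := h2c
      have hmF := hP.mem_F hC hm
      have hnF := hP.mem_F hC hn
      have ha'F := hP.mem_F hA' ha'
      have hb'F := hP.mem_F hB' hb'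
      have hab' : G.Adj a' b' := hP.adj_of_ne hA' hB' (Ne.symm hB'A') ha' hb'
      have ha'm : G.Adj a' m := hP.adj_of_ne hA' hC hA'C ha' hm
      have hb'm : G.Adj b' m := hP.adj_of_ne hB' hC hB'C hb' hm
      have hna' : G.Adj n a' := hP.adj_of_ne hC hA' (Ne.symm hA'C) hn ha'
      have hnb' : G.Adj n b' := hP.adj_of_ne hC hB' (Ne.symm hB'C) hn hb'
      have hnm : ¬ G.Adj n m := hP.not_adj_same hC hn hm
      -- prison on K4 {a', b', z, m} with fifth vertex n adjacent to a', b'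
      exact prison_contra h2 hab' hza'.symm ha'm hzb'.symm hb'm hzm
        hna' hnb' (fun h => hzn h.symm) hnm
        (fun h => hzF (h ▸ hnF)) (fun h => hzn (h.symm ▸ hzm))
        a' b' n (by simp) (by simp) (by simp) hab'.ne hna'.ne' hnb'.ne'
        (hFS ha'F) (hFS hb'F) (hFS hnF)
    · have hCAB : C = A ∨ C = B := by
        by_contra hcon
        push_neg at hcon
        exact h2c ⟨A, hA, Ne.symm hcon.1, B, hB, Ne.symm hcon.2, Ne.symm hAB,
          ⟨a, ha, hza⟩, ⟨b, hb, hzb⟩⟩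
      have hOnly0 : ∀ E ∈ P, E ≠ A → E ≠ B → ∀ e ∈ E, ¬ G.Adj z e := by
        intro E hE hEA hEB e he hze
        rcases hCAB with rfl | rfl
        · exact h2c ⟨E, hE, hEA, B, hB, Ne.symm hAB, Ne.symm hEB, ⟨e, he, hze⟩, ⟨b, hb, hzb⟩⟩
        · exact h2c ⟨E, hE, hEB, A, hA, hAB, Ne.symm hEA, ⟨e, he, hze⟩, ⟨a, ha, hza⟩⟩
      rcases hCAB with rfl | rfl
      · exact no_two_class_core h1 h2 hF hP hf hzS hzF hA hB hAB ha hb hza hzb hn hzn hOnly0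
      · exact no_two_class_core h1 h2 hF hP hf hzS hzF hB hA (Ne.symm hAB) hb ha hzb hza hn hzn
          (fun E hE h1' h2' => hOnly0 E hE h2' h1')
  · push_neg at hM
    by_cases hNon : ∃ C ∈ P, ∃ n ∈ C, ¬ G.Adj z n
    · obtain ⟨C₀, hC₀, n₀, hn₀, hzn₀⟩ := hNon
      have hC₀all : ∀ t ∈ C₀, ¬ G.Adj z t := fun t ht hadj =>
        hzn₀ (hM C₀ hC₀ ⟨t, ht, hadj⟩ n₀ hn₀)
      have hC₀A : C₀ ≠ A := fun h => hC₀all a (h ▸ ha) hza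
      have hC₀B : C₀ ≠ B := fun h => hC₀all b (h ▸ hb) hzb
      by_cases hNon2 : ∃ D₀ ∈ P, D₀ ≠ C₀ ∧ ∃ d₀ ∈ D₀, ¬ G.Adj z d₀
      · obtain ⟨D₀, hD₀, hD₀C₀, d₀, hd₀, hzd₀⟩ := hNon2
        have hD₀all : ∀ t ∈ D₀, ¬ G.Adj z t := fun t ht hadj =>
          hzd₀ (hM D₀ hD₀ ⟨t, ht, hadj⟩ d₀ hd₀)
        have hD₀A : D₀ ≠ A := fun h => hD₀all a (h ▸ ha) hza
        have hD₀B : D₀ ≠ B := fun h => hD₀all b (h ▸ hb) hzb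
        have hab : G.Adj a b := hP.adj_of_ne hA hB hAB ha hb
        have han : G.Adj a n₀ := hP.adj_of_ne hA hC₀ (Ne.symm hC₀A) ha hn₀
        have had : G.Adj a d₀ := hP.adj_of_ne hA hD₀ (Ne.symm hD₀A) ha hd₀
        have hbn : G.Adj b n₀ := hP.adj_of_ne hB hC₀ (Ne.symm hC₀B) hb hn₀
        have hbd : G.Adj b d₀ := hP.adj_of_ne hB hD₀ (Ne.symm hD₀B) hb hd₀
        have hnd : G.Adj n₀ d₀ := hP.adj_of_ne hC₀ hD₀ (Ne.symm hD₀C₀) hn₀ hd₀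
        have hz_ne_n : z ≠ n₀ := fun h => hzF (h ▸ hP.mem_F hC₀ hn₀)
        have hz_ne_d : z ≠ d₀ := fun h => hzF (h ▸ hP.mem_F hD₀ hd₀)
        -- prison on K4 {a, b, n₀, d₀} with fifth vertex z adjacent to a, b
        exact prison_contra h2 hab han had hbn hbd hnd hza hzb hzn₀ hzd₀ hz_ne_n hz_ne_d
          a b z (by simp) (by simp) (by simp) hab.ne
          (Ne.symm (fun h => hzF (h ▸ hP.mem_F hA ha)))
          (Ne.symm (fun h => hzF (h ▸ hP.mem_F hB hb)))
          (hFS (hP.mem_F hA ha)) (hFS (hP.mem_F hB hb)) hzS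
      · refine cmd_not_ext_class hF hP hf hzS hzF hC₀ hC₀all ?_
        intro t htF htC₀
        by_contra hzt
        obtain ⟨D, hD, htD⟩ := hP.exists_class htF
        have hDC₀ : D ≠ C₀ := fun h => htC₀ (h ▸ htD)
        exact hNon2 ⟨D, hD, hDC₀, t, htD, hzt⟩
    · push_neg at hNon
      refine cmd_not_adj_all hF hP hf hzS hzF ?_
      intro t htF
      obtain ⟨C, hC, htC⟩ := hP.exists_class htF
      exact hNon C hC t htC

end Helpers3
section Helpers4

variable {V : Type*} {G : SimpleGraph V} {S F : Set V}

/-- The final sub-case: only non-edge of the prison supergraph is `zx`. -/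
lemma case_one_final (h1 : H1 G S) (h2 : H2 G S) (hF : Cmd G Sᶜ 3 F)
    {P : Set (Set V)} (hP : IsCMP G F P) (hf : ∃ f : Fin 3 ↪ Set V, ∀ i, f i ∈ P)
    {x y z p q : V} (hxF : x ∈ F) (hyF : y ∈ F)
    {A B : Set V} (hA : A ∈ P) (hB : B ∈ P) (hAB : A ≠ B) (hxA : x ∈ A) (hyB : y ∈ B)
    (hzS : z ∉ S) (hzF : z ∉ F)
    (hxy : G.Adj x y) (hzy : G.Adj z y) (hzx : ¬ G.Adj z x)
    (hzp : G.Adj z p) (hzq : G.Adj z q) (hxp : G.Adj x p) (hxq : G.Adj x q)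
    (hyp : G.Adj y p) (hyq : G.Adj y q) (hpq : G.Adj p q) : False := by
  have hFS : F ⊆ Sᶜ := hF.1
  have hxS : x ∉ S := hFS hxF
  have hyS : y ∉ S := hFS hyF
  have hz_ne_x : z ≠ x := fun h => hzF (h ▸ hxF)
  have hz_ne_y : z ≠ y := fun h => hzF (h ▸ hyF)
  -- all neighbours of z in F lie in the class B
  have hOnly : ∀ E ∈ P, E ≠ B → ∀ e ∈ E, ¬ G.Adj z e := by
    intro E hE hEB e he hze
    exact no_two_class h1 h2 hF hP hf hzS hzF hE hB hEB he hyB hze hzy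
  obtain ⟨C₃, hC₃, hC₃A, hC₃B⟩ := third_class hf A B
  obtain ⟨c, hc⟩ := (hP.1 C₃ hC₃).1
  have hcF := hP.mem_F hC₃ hc
  have hcS : c ∉ S := hFS hcF
  have hzc : ¬ G.Adj z c := hOnly C₃ hC₃ hC₃B c hc
  have hxc : G.Adj x c := hP.adj_of_ne hA hC₃ (Ne.symm hC₃A) hxA hc
  have hyc : G.Adj y c := hP.adj_of_ne hB hC₃ (Ne.symm hC₃B) hyB hc
  have hz_ne_c : z ≠ c := fun h => hzF (h ▸ hcF)
  have hc_ne_p : c ≠ p := fun h => hzc (h ▸ hzp)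
  have hc_ne_q : c ≠ q := fun h => hzc (h ▸ hzq)
  by_cases hcp : G.Adj c p
  · -- prison on K4 {y, p, x, c} with fifth vertex z adjacent to y, p
    exact prison_contra h2 hyp hxy.symm hyc hxp.symm hcp.symm hxc
      hzy hzp hzx hzc hz_ne_x hz_ne_c
      y x z (by simp) (by simp) (by simp) (Ne.symm hxy.ne) (Ne.symm hz_ne_y)
      (Ne.symm hz_ne_x) hyS hxS hzS
  · by_cases hcq : G.Adj c q
    · -- prison on K4 {y, q, x, c} with fifth vertex z adjacent to y, q
      exact prison_contra h2 hyq hxy.symm hyc hxq.symm hcq.symm hxc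
        hzy hzq hzx hzc hz_ne_x hz_ne_c
        y x z (by simp) (by simp) (by simp) (Ne.symm hxy.ne) (Ne.symm hz_ne_y)
        (Ne.symm hz_ne_x) hyS hxS hzS
    · -- prison on K4 {x, y, p, q} with fifth vertex c adjacent to x, y
      exact prison_contra h2 hxy hxp hxq hyp hyq hpq
        hxc.symm hyc.symm hcp hcq
        hc_ne_p hc_ne_q
        x y c (by simp) (by simp) (by simp) hxy.ne hxc.ne hyc.ne hxS hyS hcS

/-- The case in which `z` is adjacent to `y` but not to `x`. -/
lemma case_one (h1 : H1 G S) (h2 : H2 G S) (hF : Cmd G Sᶜ 3 F)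
    {P : Set (Set V)} (hP : IsCMP G F P) (hf : ∃ f : Fin 3 ↪ Set V, ∀ i, f i ∈ P)
    {Pset : Set V} {w u v : V}
    (hrule : ∀ α ∈ Pset, ∀ β ∈ Pset, α ≠ β → ¬ G.Adj α β →
      (({α, β} : Set V) = {w, u} ∨ ({α, β} : Set V) = {w, v}))
    {x y z p q : V}
    (hxP : x ∈ Pset) (hyP : y ∈ Pset) (hzP : z ∈ Pset) (hpP : p ∈ Pset) (hqP : q ∈ Pset)
    (hxF : x ∈ F) (hyF : y ∈ F)
    {A B : Set V} (hA : A ∈ P) (hB : B ∈ P) (hAB : A ≠ B) (hxA : x ∈ A) (hyB : y ∈ B)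
    (hzS : z ∉ S) (hzF : z ∉ F)
    (hpx : p ≠ x) (hpy : p ≠ y) (hpz : p ≠ z) (hqx : q ≠ x) (hqy : q ≠ y) (hqz : q ≠ z)
    (hpq : p ≠ q)
    (hxy : G.Adj x y) (hzy : G.Adj z y) (hzx : ¬ G.Adj z x) : False := by
  have hFS : F ⊆ Sᶜ := hF.1
  have hxS : x ∉ S := hFS hxF
  have hyS : y ∉ S := hFS hyF
  have hz_ne_x : z ≠ x := fun h => hzF (h ▸ hxF)
  have hz_ne_y : z ≠ y := fun h => hzF (h ▸ hyF)
  have hwmem : ∀ α ∈ Pset, ∀ β ∈ Pset, α ≠ β → ¬ G.Adj α β → (w = α ∨ w = β) := by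
    intro α hα β hβ hne hnadj
    have hmem : w ∈ ({α, β} : Set V) := by
      rcases hrule α hα β hβ hne hnadj with h | h <;> · rw [h]; exact Set.mem_insert _ _
    rcases hmem with h | h
    · exact Or.inl h
    · exact Or.inr h
  have hw : w = z ∨ w = x := hwmem z hzP x hxP hz_ne_x hzx
  have hslot : ∀ β ∈ Pset, ∀ γ ∈ Pset, w = γ → β ≠ γ → ¬ G.Adj γ β → (β = u ∨ β = v) := by
    intro β hβ γ hγ hwγ hne hnadj
    rcases hrule γ hγ β hβ (Ne.symm hne) hnadj with h | h
    · have hmem : β ∈ ({w, u} : Set V) := by rw [← h]; exact Or.inr rfl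
      rcases hmem with h' | h'
      · exact absurd (h'.trans hwγ) hne
      · exact Or.inl h'
    · have hmem : β ∈ ({w, v} : Set V) := by rw [← h]; exact Or.inr rfl
      rcases hmem with h' | h'
      · exact absurd (h'.trans hwγ) hne
      · exact Or.inr h'
  rcases hw with hwz | hwx
  · -- w = z : every pair avoiding z is an edge
    have hadj' : ∀ α ∈ Pset, ∀ β ∈ Pset, α ≠ β → α ≠ z → β ≠ z → G.Adj α β := by
      intro α hα β hβ hne hαz hβz
      by_contra hnadj
      rcases hwmem α hα β hβ hne hnadj with h | h
      · exact hαz (h.symm.trans hwz)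
      · exact hβz (h.symm.trans hwz)
    have hxp : G.Adj x p := hadj' x hxP p hpP (Ne.symm hpx) (Ne.symm hz_ne_x) hpz
    have hxq : G.Adj x q := hadj' x hxP q hqP (Ne.symm hqx) (Ne.symm hz_ne_x) hqz
    have hyp : G.Adj y p := hadj' y hyP p hpP (Ne.symm hpy) (Ne.symm hz_ne_y) hpz
    have hyq : G.Adj y q := hadj' y hyP q hqP (Ne.symm hqy) (Ne.symm hz_ne_y) hqz
    have hpq' : G.Adj p q := hadj' p hpP q hqP hpq hpz hqz
    have hxu : x = u ∨ x = v := hslot x hxP z hzP hwz (Ne.symm hz_ne_x) hzx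
    by_cases hzp : G.Adj z p
    · by_cases hzq : G.Adj z q
      · exact case_one_final h1 h2 hF hP hf hxF hyF hA hB hAB hxA hyB hzS hzF
          hxy hzy hzx hzp hzq hxp hxq hyp hyq hpq'
      · -- prison on K4 {y, p, x, q} with fifth vertex z adjacent to y, p
        exact prison_contra h2 hyp hxy.symm hyq hxp.symm hpq' hxq
          hzy hzp hzx hzq hz_ne_x (Ne.symm hqz)
          y x z (by simp) (by simp) (by simp) (Ne.symm hxy.ne) (Ne.symm hz_ne_y)
          (Ne.symm hz_ne_x) hyS hxS hzS
    · have hzq : G.Adj z q := by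
        by_contra hzq
        have hpu := hslot p hpP z hzP hwz hpz hzp
        have hqu := hslot q hqP z hzP hwz hqz hzq
        rcases hxu with e1 | e1 <;> rcases hpu with e2 | e2 <;> rcases hqu with e3 | e3
        · exact hpx (e2.trans e1.symm)
        · exact hpx (e2.trans e1.symm)
        · exact hqx (e3.trans e1.symm)
        · exact hpq (e2.trans e3.symm)
        · exact hpq (e2.trans e3.symm)
        · exact hqx (e3.trans e1.symm)
        · exact hpx (e2.trans e1.symm)
        · exact hpq (e2.trans e3.symm)
      -- prison on K4 {y, q, x, p} with fifth vertex z adjacent to y, q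
      exact prison_contra h2 hyq hxy.symm hyp hxq.symm hpq'.symm hxp
        hzy hzq hzx hzp hz_ne_x (Ne.symm hpz)
        y x z (by simp) (by simp) (by simp) (Ne.symm hxy.ne) (Ne.symm hz_ne_y)
        (Ne.symm hz_ne_x) hyS hxS hzS
  · -- w = x : every pair avoiding x is an edge
    have hadj' : ∀ α ∈ Pset, ∀ β ∈ Pset, α ≠ β → α ≠ x → β ≠ x → G.Adj α β := by
      intro α hα β hβ hne hαx hβx
      by_contra hnadj
      rcases hwmem α hα β hβ hne hnadj with h | h
      · exact hαx (h.symm.trans hwx)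
      · exact hβx (h.symm.trans hwx)
    have hzp : G.Adj z p := hadj' z hzP p hpP (Ne.symm hpz) hz_ne_x hpx
    have hzq : G.Adj z q := hadj' z hzP q hqP (Ne.symm hqz) hz_ne_x hqx
    have hyp : G.Adj y p := hadj' y hyP p hpP (Ne.symm hpy) (Ne.symm hxy.ne) hpx
    have hyq : G.Adj y q := hadj' y hyP q hqP (Ne.symm hqy) (Ne.symm hxy.ne) hqx
    have hpq' : G.Adj p q := hadj' p hpP q hqP hpq hpx hqx
    have hzu : z = u ∨ z = v := hslot z hzP x hxP hwx hz_ne_x (fun h => hzx h.symm)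
    by_cases hxp : G.Adj x p
    · by_cases hxq : G.Adj x q
      · exact case_one_final h1 h2 hF hP hf hxF hyF hA hB hAB hxA hyB hzS hzF
          hxy hzy hzx hzp hzq hxp hxq hyp hyq hpq'
      · -- prison on K4 {y, p, z, q} with fifth vertex x adjacent to y, p
        exact prison_contra h2 hyp hzy.symm hyq hzp.symm hpq' hzq
          hxy hxp (fun h => hzx h.symm) hxq (Ne.symm hz_ne_x) (Ne.symm hqx)
          y z x (by simp) (by simp) (by simp) (Ne.symm hz_ne_y) hxy.ne' hz_ne_x
          hyS hzS hxS
    · have hxq : G.Adj x q := by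
        by_contra hxq
        have hpu := hslot p hpP x hxP hwx hpx hxp
        have hqu := hslot q hqP x hxP hwx hqx hxq
        rcases hzu with e1 | e1 <;> rcases hpu with e2 | e2 <;> rcases hqu with e3 | e3
        · exact hpz (e2.trans e1.symm)
        · exact hpz (e2.trans e1.symm)
        · exact hqz (e3.trans e1.symm)
        · exact hpq (e2.trans e3.symm)
        · exact hpq (e2.trans e3.symm)
        · exact hqz (e3.trans e1.symm)
        · exact hpz (e2.trans e1.symm)
        · exact hpq (e2.trans e3.symm)
      -- prison on K4 {y, q, z, p} with fifth vertex x adjacent to y, q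
      exact prison_contra h2 hyq hzy.symm hyp hzq.symm hpq'.symm hzp
        hxy hxq (fun h => hzx h.symm) hxp (Ne.symm hz_ne_x) (Ne.symm hpx)
        y z x (by simp) (by simp) (by simp) (Ne.symm hz_ne_y) hxy.ne' hz_ne_x
        hyS hzS hxS

end Helpers4
/-- Under (H1) and (H2), every supergraph of a prison in `G`
containing an edge with both endpoints in some `F ∈ cmd₃(G−S)` is contained in
`S ∪ F`. -/
theorem noCrossPrison3 {V : Type*} [Fintype V] (G : SimpleGraph V)
    (S : Set V) (h1 : H1 G S) (h2 : H2 G S)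
    (F : Set V) (hF : Cmd G Sᶜ 3 F)
    (P : Set V) (hP : SupPrison G P)
    (hedge : ∃ x y : V, x ∈ P ∧ y ∈ P ∧ x ∈ F ∧ y ∈ F ∧ G.Adj x y) :
    P ⊆ S ∪ F := by
  obtain ⟨x, y, hxP, hyP, hxF, hyF, hxy⟩ := hedge
  intro z hzP
  by_contra hzc
  rw [Set.mem_union] at hzc
  push_neg at hzc
  obtain ⟨hzS, hzF⟩ := hzc
  have hFS : F ⊆ Sᶜ := hF.1
  have hxS : x ∉ S := hFS hxF
  have hyS : y ∉ S := hFS hyF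
  obtain ⟨Part, hPart, hf3⟩ := hF.2.1
  have hf : ∃ f : Fin 3 ↪ Set V, ∀ i, f i ∈ Part := hf3
  have hz_ne_x : z ≠ x := fun h => hzF (h ▸ hxF)
  have hz_ne_y : z ≠ y := fun h => hzF (h ▸ hyF)
  have hx_ne_y : x ≠ y := hxy.ne
  obtain ⟨A, hA, hxA⟩ := hPart.exists_class hxF
  obtain ⟨B, hB, hyB⟩ := hPart.exists_class hyF
  have hAB : A ≠ B := by
    rintro rfl
    exact hPart.not_adj_same hA hxA hyB hxy
  obtain ⟨hP5, w, u, v, hrule⟩ := hP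
  have hPfin : P.Finite := by
    rcases P.finite_or_infinite with h | h
    · exact h
    · rw [h.ncard] at hP5; exact absurd hP5 (by norm_num)
  have hsub3 : ({x, y, z} : Set V) ⊆ P := by
    rw [Set.insert_subset_iff, Set.insert_subset_iff, Set.singleton_subset_iff]
    exact ⟨hxP, hyP, hzP⟩
  have h3 : ({x, y, z} : Set V).ncard = 3 := by
    rw [Set.ncard_insert_of_notMem (by simp [hx_ne_y, Ne.symm hz_ne_x]),
      Set.ncard_insert_of_notMem (by simp [Ne.symm hz_ne_y]), Set.ncard_singleton]
  have h2' : (P \ {x, y, z}).ncard = 2 := by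
    rw [Set.ncard_diff hsub3 (Set.toFinite _), hP5, h3]
  obtain ⟨p, q, hpq, hpqeq⟩ := Set.ncard_eq_two.mp h2'
  have hpmem : p ∈ P \ ({x, y, z} : Set V) := by rw [hpqeq]; exact Set.mem_insert _ _
  have hqmem : q ∈ P \ ({x, y, z} : Set V) := by rw [hpqeq]; exact Or.inr rfl
  obtain ⟨hpP, hpn⟩ := hpmem
  obtain ⟨hqP, hqn⟩ := hqmem
  have hpx : p ≠ x := fun h => hpn (by simp [h])
  have hpy : p ≠ y := fun h => hpn (by simp [h])
  have hpz : p ≠ z := fun h => hpn (by simp [h])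
  have hqx : q ≠ x := fun h => hqn (by simp [h])
  have hqy : q ≠ y := fun h => hqn (by simp [h])
  have hqz : q ≠ z := fun h => hqn (by simp [h])
  by_cases hzx : G.Adj z x <;> by_cases hzy : G.Adj z y
  · exact no_two_class h1 h2 hF hPart hf hzS hzF hA hB hAB hxA hyB hzx hzy
  · exact case_one h1 h2 hF hPart hf hrule hyP hxP hzP hpP hqP hyF hxF hB hA (Ne.symm hAB)
      hyB hxA hzS hzF hpy hpx hpz hqy hqx hqz hpq hxy.symm hzx hzy
  · exact case_one h1 h2 hF hPart hf hrule hxP hyP hzP hpP hqP hxF hyF hA hB hAB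
      hxA hyB hzS hzF hpx hpy hpz hqx hqy hqz hpq hxy hzy hzx
  · -- z is adjacent to neither x nor y: P itself induces a prison on K4 {p,q,x,y}
    have hwmem : ∀ α ∈ P, ∀ β ∈ P, α ≠ β → ¬ G.Adj α β → (w = α ∨ w = β) := by
      intro α hα β hβ hne hnadj
      have hmem : w ∈ ({α, β} : Set V) := by
        rcases hrule α hα β hβ hne hnadj with h | h <;> · rw [h]; exact Set.mem_insert _ _
      rcases hmem with h | h
      · exact Or.inl h
      · exact Or.inr h
    have hwz : w = z := by
      rcases hwmem z hzP x hxP hz_ne_x hzx with h | h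
      · exact h
      · rcases hwmem z hzP y hyP hz_ne_y hzy with h' | h'
        · exact h'
        · exact absurd (h.symm.trans h') hx_ne_y
    have hadj' : ∀ α ∈ P, ∀ β ∈ P, α ≠ β → α ≠ z → β ≠ z → G.Adj α β := by
      intro α hα β hβ hne hαz hβz
      by_contra hnadj
      rcases hwmem α hα β hβ hne hnadj with h | h
      · exact hαz (h.symm.trans hwz).symm.symm
      · exact hβz (h.symm.trans hwz).symm.symm
    have hxp : G.Adj x p := hadj' x hxP p hpP (Ne.symm hpx) (Ne.symm hz_ne_x) hpz
    have hxq : G.Adj x q := hadj' x hxP q hqP (Ne.symm hqx) (Ne.symm hz_ne_x) hqz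
    have hyp : G.Adj y p := hadj' y hyP p hpP (Ne.symm hpy) (Ne.symm hz_ne_y) hpz
    have hyq : G.Adj y q := hadj' y hyP q hqP (Ne.symm hqy) (Ne.symm hz_ne_y) hqz
    have hpq' : G.Adj p q := hadj' p hpP q hqP hpq hpz hqz
    have hslot : ∀ β ∈ P, β ≠ z → ¬ G.Adj z β → (β = u ∨ β = v) := by
      intro β hβ hne hnadj
      rcases hrule z hzP β hβ (Ne.symm hne) hnadj with h | h
      · have hm : β ∈ ({w, u} : Set V) := by rw [← h]; exact Or.inr rfl
        rcases hm with h' | h'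
        · exact absurd (h'.trans hwz) hne
        · exact Or.inl h'
      · have hm : β ∈ ({w, v} : Set V) := by rw [← h]; exact Or.inr rfl
        rcases hm with h' | h'
        · exact absurd (h'.trans hwz) hne
        · exact Or.inr h'
    have hxu := hslot x hxP (Ne.symm hz_ne_x) hzx
    have hyu := hslot y hyP (Ne.symm hz_ne_y) hzy
    have hzp : G.Adj z p := by
      by_contra hzp
      have hpu := hslot p hpP hpz hzp
      rcases hxu with e1 | e1 <;> rcases hyu with e2 | e2 <;> rcases hpu with e3 | e3 <;>
        first
        | exact hx_ne_y (e1.trans e2.symm)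
        | exact hpx (e3.trans e1.symm)
        | exact hpy (e3.trans e2.symm)
    have hzq : G.Adj z q := by
      by_contra hzq
      have hqu := hslot q hqP hqz hzq
      rcases hxu with e1 | e1 <;> rcases hyu with e2 | e2 <;> rcases hqu with e3 | e3 <;>
        first
        | exact hx_ne_y (e1.trans e2.symm)
        | exact hqx (e3.trans e1.symm)
        | exact hqy (e3.trans e2.symm)
    exact prison_contra h2 hpq' hxp.symm hyp.symm hxq.symm hyq.symm hxy
      hzp hzq hzx hzy hz_ne_x hz_ne_y
      x y z (by simp) (by simp) (by simp) hx_ne_y (Ne.symm hz_ne_x) (Ne.symm hz_ne_y)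
      hxS hyS hzS
end PrisonFreePaper
end

section
/- Let G be a graph and S⊆V(G) a set satisfying (H1) and (H2). Let e be an edge of G[S] with B_e nonempty, and let s∈S. Then either N(s) contains all of V(B_e), or N(s) intersects at most one of the two classes of the complete bipartite graph induced by V(B_e) in G−S. -/
namespace PrisonFreePaper

variable {V : Type*}

/-! ### Auxiliary lemmas -/

lemma bverts_props {G : SimpleGraph V} {S : Set V} {a b x : V}
    (hx : x ∈ BVerts G S a b) : x ∉ S ∧ G.Adj x a ∧ G.Adj x b := by
  obtain ⟨f, hf, hxf⟩ := hx
  obtain ⟨⟨hfe, -⟩, hfab⟩ := hf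
  refine ⟨?_, hfab x hxf⟩
  induction f using Sym2.ind with
  | _ u v =>
    rw [edgesWithin, SimpleGraph.mem_edgeSet] at hfe
    obtain ⟨-, hu, hv⟩ := hfe
    rcases Sym2.mem_iff.mp hxf with rfl | rfl
    · exact hu
    · exact hv

lemma exists_partner {G : SimpleGraph V} {S : Set V} {a b x : V}
    (hx : x ∈ BVerts G S a b) :
    ∃ y, y ∈ BVerts G S a b ∧ G.Adj x y ∧
      ∀ w, w ∉ S → G.Adj w x → G.Adj w y → False := by
  obtain ⟨f, hf, hxf⟩ := hx
  have hf' := hf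
  obtain ⟨⟨hfe, hfno⟩, hfab⟩ := hf'
  induction f using Sym2.ind with
  | _ u v =>
    rw [edgesWithin, SimpleGraph.mem_edgeSet] at hfe
    obtain ⟨huv, hu, hv⟩ := hfe
    rcases Sym2.mem_iff.mp hxf with rfl | rfl
    · refine ⟨v, ⟨s(x, v), hf, Sym2.mem_mk_right x v⟩, huv, ?_⟩
      intro w hwS hwx hwv
      exact hfno ⟨w, hwS, fun z hz => by
        rcases Sym2.mem_iff.mp hz with rfl | rfl
        · exact hwx
        · exact hwv⟩
    · refine ⟨u, ⟨s(u, x), hf, Sym2.mem_mk_left u x⟩, huv.symm, ?_⟩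
      intro w hwS hwx hwu
      exact hfno ⟨w, hwS, fun z hz => by
        rcases Sym2.mem_iff.mp hz with rfl | rfl
        · exact hwu
        · exact hwx⟩

lemma edge_in_pair {G : SimpleGraph V} {T : Set V} {p q : V}
    (hT : T ⊆ {p, q}) {e : Sym2 V} (he : e ∈ edgesWithin G T) : e = s(p, q) := by
  induction e using Sym2.ind with
  | _ u v =>
    rw [edgesWithin, SimpleGraph.mem_edgeSet] at he
    obtain ⟨huv, hu, hv⟩ := he
    have hne := huv.ne
    have hu' := hT hu
    have hv' := hT hv
    simp only [Set.mem_insert_iff, Set.mem_singleton_iff] at hu' hv'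
    rcases hu' with rfl | rfl <;> rcases hv' with rfl | rfl
    · exact absurd rfl hne
    · rfl
    · exact Sym2.eq_swap
    · exact absurd rfl hne

lemma edge_in_triple {G : SimpleGraph V} {T : Set V} {p q r : V}
    (hT : T ⊆ {p, q, r}) (hrp : ¬ G.Adj r p) (hrq : ¬ G.Adj r q)
    {e : Sym2 V} (he : e ∈ edgesWithin G T) : e = s(p, q) := by
  induction e using Sym2.ind with
  | _ u v =>
    rw [edgesWithin, SimpleGraph.mem_edgeSet] at he
    obtain ⟨huv, hu, hv⟩ := he
    have hne := huv.ne
    have hu' := hT hu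
    have hv' := hT hv
    simp only [Set.mem_insert_iff, Set.mem_singleton_iff] at hu' hv'
    rcases hu' with rfl | rfl | rfl <;> rcases hv' with rfl | rfl | rfl
    · exact absurd rfl hne
    · rfl
    · exact absurd huv.symm hrp
    · exact Sym2.eq_swap
    · exact absurd rfl hne
    · exact absurd huv.symm hrq
    · exact absurd huv hrp
    · exact absurd huv hrq
    · exact absurd rfl hne

lemma inducesPrison_five {G : SimpleGraph V} {v0 v1 v2 v3 v4 : V}
    (h01 : G.Adj v0 v1) (h02 : G.Adj v0 v2) (h03 : G.Adj v0 v3)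
    (h12 : G.Adj v1 v2) (h13 : G.Adj v1 v3) (h23 : G.Adj v2 v3)
    (h40 : G.Adj v4 v0) (h41 : G.Adj v4 v1)
    (n42 : ¬ G.Adj v4 v2) (n43 : ¬ G.Adj v4 v3)
    (e42 : v4 ≠ v2) (e43 : v4 ≠ v3) :
    InducesPrison G {v0, v1, v2, v3, v4} := by
  have n01 := h01.ne; have n02 := h02.ne; have n03 := h03.ne
  have n12 := h12.ne; have n13 := h13.ne; have n23 := h23.ne
  have n40 := h40.ne; have n41 := h41.ne
  have h10 := h01.symm; have h20 := h02.symm; have h30 := h03.symm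
  have h21 := h12.symm; have h31 := h13.symm; have h32 := h23.symm
  have h04 := h40.symm; have h14 := h41.symm
  have n24 : ¬ G.Adj v2 v4 := fun h => n42 h.symm
  have n34 : ¬ G.Adj v3 v4 := fun h => n43 h.symm
  refine ⟨⟨![v0, v1, v2, v3, v4], ?_⟩, ?_, ?_⟩
  · intro i j hij
    fin_cases i <;> fin_cases j <;> simp_all
  · ext z
    simp [Matrix.range_cons, Matrix.range_empty, Function.Embedding.coeFn_mk, Fin.exists_fin_succ]
    tauto
  · intro i j
    fin_cases i <;> fin_cases j <;>
      simp only [Function.Embedding.coeFn_mk, Matrix.cons_val_zero, Matrix.cons_val_one,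
        Matrix.head_cons, Matrix.cons_val_two, Matrix.tail_cons, Matrix.cons_val_three,
        Matrix.cons_val_four] <;>
      first
        | exact iff_of_true (by assumption) (by simp [prison, Fin.ext_iff] <;> decide)
        | exact iff_of_false (by assumption) (by simp [prison, Fin.ext_iff] <;> decide)
        | exact iff_of_false (G.loopless.irrefl _) (by simp [prison, Fin.ext_iff] <;> decide)

/-- Under (H1) and (H2), for every edge `ab` of `G[S]` with
`B_{ab}` nonempty and every `s ∈ S`: either `N(s)` contains all of `V(B_{ab})`, or
`N(s)` intersects at most one of the two classes of the complete bipartite graph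
induced by `V(B_{ab})`. -/
theorem consistentFs2 {V : Type*} [Fintype V] (G : SimpleGraph V)
    (S : Set V) (h1 : H1 G S) (h2 : H2 G S)
    (a b : V) (ha : a ∈ S) (hb : b ∈ S) (hab : G.Adj a b)
    (hne : (BOf G S a b).Nonempty) (s : V) (hs : s ∈ S) :
    (∀ x ∈ BVerts G S a b, G.Adj s x) ∨
    (∀ P : Set (Set V), IsCMP G (BVerts G S a b) P →
      MeetsAtMostOneClass G P s) := by
  by_cases hall : ∀ x ∈ BVerts G S a b, G.Adj s x
  · exact Or.inl hall
  right
  push_neg at hall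
  obtain ⟨x, hxB, hsx⟩ := hall
  obtain ⟨hxS, hxa, hxb⟩ := bverts_props hxB
  have hsnex : s ≠ x := fun h => hxS (h ▸ hs)
  have hsa' : s ≠ a := fun h => hsx (by rw [h]; exact hxa.symm)
  have hsb' : s ≠ b := fun h => hsx (by rw [h]; exact hxb.symm)
  intro P hP
  obtain ⟨hcls, hunion, hdisj, hadj⟩ := hP
  intro C hC D hD hexC hexD
  by_contra hCD
  obtain ⟨c, hcC, hsc⟩ := hexC
  obtain ⟨d, hdD, hsd⟩ := hexD
  have hmem : ∀ {z : V} {E : Set V}, E ∈ P → z ∈ E → z ∈ BVerts G S a b :=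
    fun hE hzE => (hcls _ hE).2 hzE
  have hcB := hmem hC hcC
  have hdB := hmem hD hdD
  have adj_ne : ∀ {u v : V} {E F : Set V}, E ∈ P → F ∈ P → u ∈ E → v ∈ F →
      E ≠ F → G.Adj u v := by
    intro u v E F hE hF huE hvF hEF
    rw [hadj u (hmem hE huE) v (hmem hF hvF)]
    rintro ⟨W, hW, huW, hvW⟩
    have hEW : E = W := by
      by_contra h; exact Set.disjoint_left.mp (hdisj E hE W hW h) huE huW
    have hFW : F = W := by
      by_contra h; exact Set.disjoint_left.mp (hdisj F hF W hW h) hvF hvW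
    exact hEF (hEW.trans hFW.symm)
  have nadj_same : ∀ {u v : V} {E : Set V}, E ∈ P → u ∈ E → v ∈ E →
      ¬ G.Adj u v := by
    intro u v E hE huE hvE h
    exact (hadj u (hmem hE huE) v (hmem hE hvE)).mp h ⟨E, hE, huE, hvE⟩
  have hxU : x ∈ ⋃₀ P := by rw [hunion]; exact hxB
  obtain ⟨E, hE, hxE⟩ := hxU
  -- key contradiction builder
  have key : ∀ p q : V, p ∈ BVerts G S a b → q ∈ BVerts G S a b →
      G.Adj s p → G.Adj s q → G.Adj p q → ¬ G.Adj x p → G.Adj x q → False := by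
    intro p q hpB hqB hsp hsq hpq hxp hxq
    obtain ⟨hpS, hpa, hpb⟩ := bverts_props hpB
    obtain ⟨hqS, hqa, hqb⟩ := bverts_props hqB
    have hxnep : x ≠ p := fun h => hsx (by rw [h]; exact hsp)
    have nxs : ¬ G.Adj x s := fun h => hsx h.symm
    by_cases hsa : G.Adj s a
    · -- prison {a, q, p, s, x}
      have hpr := inducesPrison_five (G := G)
        hqa.symm hpa.symm hsa.symm hpq.symm hsq.symm hsp.symm
        hxa hxq hxp nxs hxnep hsnex.symm
      obtain ⟨e₁, e₂, hnee, he₁, he₂⟩ := h2 _ hpr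
      have hsub : ({a, q, p, s, x} : Set V) ∩ S ⊆ {s, a} := by
        rintro z ⟨hz1, hz2⟩
        simp only [Set.mem_insert_iff, Set.mem_singleton_iff] at hz1 ⊢
        rcases hz1 with rfl | rfl | rfl | rfl | rfl
        · right; rfl
        · exact absurd hz2 hqS
        · exact absurd hz2 hpS
        · left; rfl
        · exact absurd hz2 hxS
      exact hnee ((edge_in_pair hsub he₁).trans (edge_in_pair hsub he₂).symm)
    by_cases hsb : G.Adj s b
    · -- prison {b, q, p, s, x}
      have hpr := inducesPrison_five (G := G)
        hqb.symm hpb.symm hsb.symm hpq.symm hsq.symm hsp.symm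
        hxb hxq hxp nxs hxnep hsnex.symm
      obtain ⟨e₁, e₂, hnee, he₁, he₂⟩ := h2 _ hpr
      have hsub : ({b, q, p, s, x} : Set V) ∩ S ⊆ {s, b} := by
        rintro z ⟨hz1, hz2⟩
        simp only [Set.mem_insert_iff, Set.mem_singleton_iff] at hz1 ⊢
        rcases hz1 with rfl | rfl | rfl | rfl | rfl
        · right; rfl
        · exact absurd hz2 hqS
        · exact absurd hz2 hpS
        · left; rfl
        · exact absurd hz2 hxS
      exact hnee ((edge_in_pair hsub he₁).trans (edge_in_pair hsub he₂).symm)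
    · -- prison {p, q, a, b, s}
      have hpr := inducesPrison_five (G := G)
        hpq hpa hpb hqa hqb hab hsp hsq hsa hsb hsa' hsb'
      obtain ⟨e₁, e₂, hnee, he₁, he₂⟩ := h2 _ hpr
      have hsub : ({p, q, a, b, s} : Set V) ∩ S ⊆ {a, b, s} := by
        rintro z ⟨hz1, hz2⟩
        simp only [Set.mem_insert_iff, Set.mem_singleton_iff] at hz1 ⊢
        rcases hz1 with rfl | rfl | rfl | rfl | rfl
        · exact absurd hz2 hpS
        · exact absurd hz2 hqS
        · left; rfl
        · right; left; rfl
        · right; right; rfl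
      exact hnee ((edge_in_triple hsub hsa hsb he₁).trans
        (edge_in_triple hsub hsa hsb he₂).symm)
  -- x's class is C or D
  have hEor : E = C ∨ E = D := by
    by_contra h
    push_neg at h
    obtain ⟨hEC, hED⟩ := h
    obtain ⟨y, hyB, hxy, hno⟩ := exists_partner hxB
    have hyU : y ∈ ⋃₀ P := by rw [hunion]; exact hyB
    obtain ⟨F, hF, hyF⟩ := hyU
    have hFE : F ≠ E := fun h' => nadj_same hE hxE (h' ▸ hyF) hxy
    by_cases hFC : F = C
    · exact hno d (bverts_props hdB).1
        (adj_ne hD hE hdD hxE (fun h' => hED h'.symm))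
        (adj_ne hD hF hdD hyF (by rw [hFC]; exact fun h' => hCD h'.symm))
    · exact hno c (bverts_props hcB).1
        (adj_ne hC hE hcC hxE (fun h' => hEC h'.symm))
        (adj_ne hC hF hcC hyF (fun h' => hFC h'.symm))
  rcases hEor with rfl | rfl
  · exact key c d hcB hdB hsc hsd (adj_ne hC hD hcC hdD hCD)
      (nadj_same hC hxE hcC) (adj_ne hE hD hxE hdD hCD)
  · exact key d c hdB hcB hsd hsc (adj_ne hD hC hdD hcC (fun h => hCD h.symm))
      (nadj_same hD hxE hdD) (adj_ne hE hC hxE hcC (fun h => hCD h.symm))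

end PrisonFreePaper
end
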